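/- arXiv:1109.4862 — 13 statements merged into one kernel-verified Lean document; each statement's English description precedes it below -/
import Mathlib

section
/- Assume that add(N) = cof(N), where N is the class of Lebesgue null subsets of [0,1]. Then there exists a monotone G_δ hull operation on N, i.e. a map φ : N → P([0,1]) such that for every A ∈ N the set φ(A) is a G_δ subset of [0,1] containing A with λ*(φ(A)) = λ*(A), and A ⊆ A' implies φ(A) ⊆ φ(A'). -/
open MeasureTheory Set
open scoped ENNReal Classical

noncomputable section

/-- The class of Lebesgue null subsets of `[0,1]`. -/
def NullSets : Set (Set ℝ) := {A | A ⊆ Icc (0:ℝ) 1 ∧ volume A = 0}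

/-- `φ` is a monotone hull operation on the class `D ⊆ 𝒫([0,1])`, where the hulls are
required to satisfy the predicate `Good` (e.g. Borel or Gδ). Here `volume` applied to an
arbitrary set is the Lebesgue outer measure. -/
def IsMonotoneHullOn (D : Set (Set ℝ)) (Good : Set ℝ → Prop) (φ : Set ℝ → Set ℝ) : Prop :=
  (∀ A ∈ D, Good (φ A) ∧ φ A ⊆ Icc (0:ℝ) 1 ∧ A ⊆ φ A ∧ volume (φ A) = volume A) ∧
  ∀ A ∈ D, ∀ A' ∈ D, A ⊆ A' → φ A ⊆ φ A'

/-- `add(N)`: the least cardinality of a family of null subsets of `[0,1]` whose union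
is not null. -/
def addNull : Cardinal :=
  sInf { c | ∃ F : Set (Set ℝ), (∀ A ∈ F, A ∈ NullSets) ∧ volume (⋃₀ F) ≠ 0 ∧
    c = Cardinal.mk F }

/-- `cof(N)`: the least cardinality of a cofinal family of null subsets of `[0,1]`. -/
def cofNull : Cardinal :=
  sInf { c | ∃ F : Set (Set ℝ), (∀ A ∈ F, A ∈ NullSets) ∧
    (∀ N ∈ NullSets, ∃ A ∈ F, N ⊆ A) ∧ c = Cardinal.mk F }

/-- Every null subset of `[0,1]` has a Gδ null hull inside `[0,1]`. -/
lemma exists_gdelta_hull (A : Set ℝ) (hA : A ∈ NullSets) :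
    ∃ G : Set ℝ, IsGδ G ∧ G ⊆ Icc (0:ℝ) 1 ∧ A ⊆ G ∧ volume G = 0 := by
  obtain ⟨hsub, hnull⟩ := hA
  have hU : ∀ n : ℕ, ∃ U : Set ℝ, A ⊆ U ∧ IsOpen U ∧ volume U < ((n : ℝ≥0∞) + 1)⁻¹ := by
    intro n
    refine Set.exists_isOpen_lt_of_lt A _ ?_
    rw [hnull]
    simp [ENNReal.inv_pos]
  choose U hAU hUopen hUvol using hU
  refine ⟨(⋂ n, U n) ∩ Icc 0 1, ?_, inter_subset_right, subset_inter (subset_iInter hAU) hsub, ?_⟩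
  · exact (IsGδ.iInter_of_isOpen hUopen).inter isClosed_Icc.isGδ
  · by_contra hne
    obtain ⟨n, hn⟩ := ENNReal.exists_inv_nat_lt hne
    have h1 : volume ((⋂ m, U m) ∩ Icc 0 1) ≤ volume (U (n+1)) :=
      measure_mono (inter_subset_left.trans (iInter_subset _ _))
    have h2 : volume (U (n+1)) < ((n : ℝ≥0∞))⁻¹ := by
      refine (hUvol (n+1)).trans_le ?_
      rw [ENNReal.inv_le_inv]
      push_cast
      exact le_add_of_le_of_nonneg (le_add_of_le_of_nonneg le_rfl zero_le_one) zero_le_one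
    exact absurd (hn.trans_le (h1.trans h2.le)) (lt_irrefl _)
  
/-- The chosen Gδ null hull; `∅` for sets that are not null subsets of `[0,1]`. -/
def gdHull (A : Set ℝ) : Set ℝ :=
  if h : A ∈ NullSets then (exists_gdelta_hull A h).choose else ∅

lemma gdHull_isGδ (A : Set ℝ) : IsGδ (gdHull A) := by
  rw [gdHull]; split
  · exact (exists_gdelta_hull A ‹_›).choose_spec.1
  · exact IsGδ.empty

lemma gdHull_mem (A : Set ℝ) : gdHull A ∈ NullSets := by
  rw [gdHull]; split
  · obtain ⟨-, h1, -, h2⟩ := (exists_gdelta_hull A ‹_›).choose_spec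
    exact ⟨h1, h2⟩
  · exact ⟨empty_subset _, measure_empty⟩

lemma subset_gdHull {A : Set ℝ} (h : A ∈ NullSets) : A ⊆ gdHull A := by
  rw [gdHull, dif_pos h]
  exact (exists_gdelta_hull A h).choose_spec.2.2.1

/-- A union of fewer than `addNull` null subsets of `[0,1]` is null. -/
lemma small_union_null {ι : Type} (f : ι → Set ℝ) (hf : ∀ i, f i ∈ NullSets)
    (hcard : Cardinal.mk ι < addNull) : volume (⋃ i, f i) = 0 := by
  by_contra hne
  have hmem : Cardinal.mk (Set.range f) ∈ { c | ∃ F : Set (Set ℝ),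
      (∀ A ∈ F, A ∈ NullSets) ∧ volume (⋃₀ F) ≠ 0 ∧ c = Cardinal.mk F } := by
    refine ⟨Set.range f, ?_, ?_, rfl⟩
    · rintro A ⟨i, rfl⟩; exact hf i
    · rwa [sUnion_range]
  have : addNull ≤ Cardinal.mk (Set.range f) := csInf_le' hmem
  exact absurd (this.trans Cardinal.mk_range_le) (not_le.2 hcard)

/-- A cofinal family of the minimal cardinality exists. -/
lemma exists_cof_family : ∃ F : Set (Set ℝ), (∀ A ∈ F, A ∈ NullSets) ∧
    (∀ N ∈ NullSets, ∃ A ∈ F, N ⊆ A) ∧ cofNull = Cardinal.mk F := by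
  have hne : { c | ∃ F : Set (Set ℝ), (∀ A ∈ F, A ∈ NullSets) ∧
      (∀ N ∈ NullSets, ∃ A ∈ F, N ⊆ A) ∧ c = Cardinal.mk F }.Nonempty :=
    ⟨Cardinal.mk NullSets, NullSets, fun A hA => hA, fun N hN => ⟨N, hN, le_rfl⟩, rfl⟩
  exact csInf_mem hne

/-- The increasing tower of Gδ null hulls, built by transfinite recursion along
`cofNull.ord.toType`. -/
def tower (e : cofNull.ord.ToType → Set ℝ) : cofNull.ord.ToType → Set ℝ :=
  fun i => gdHull ((⋃ j : Iio i, tower e j) ∪ e i)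
termination_by i => i
decreasing_by exact j.2

lemma tower_def (e : cofNull.ord.ToType → Set ℝ) (i : cofNull.ord.ToType) :
    tower e i = gdHull ((⋃ j : Iio i, tower e j) ∪ e i) := by
  rw [tower]

section Tower

variable {e : cofNull.ord.ToType → Set ℝ} (hadd : addNull = cofNull)
  (he : ∀ i, e i ∈ NullSets)

lemma tower_mem (i : cofNull.ord.ToType) : tower e i ∈ NullSets := by
  rw [tower_def]; exact gdHull_mem _

lemma tower_isGδ (i : cofNull.ord.ToType) : IsGδ (tower e i) := by
  rw [tower_def]; exact gdHull_isGδ _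

include hadd he in
lemma tower_arg_null (i : cofNull.ord.ToType) :
    ((⋃ j : Iio i, tower e j) ∪ e i) ∈ NullSets := by
  constructor
  · apply union_subset
    · exact iUnion_subset fun j => (tower_mem j.1).1
    · exact (he i).1
  · rw [measure_union_null_iff]
    refine ⟨?_, (he i).2⟩
    apply small_union_null (fun j : Iio i => tower e j) (fun j => tower_mem j.1)
    rw [hadd]
    exact Cardinal.mk_Iio_ord_toType i

include hadd he in
lemma subset_tower (i : cofNull.ord.ToType) : e i ⊆ tower e i := by
  rw [tower_def]
  exact subset_union_right.trans (subset_gdHull (tower_arg_null hadd he i))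

include hadd he in
lemma tower_mono {j i : cofNull.ord.ToType} (hji : j ≤ i) : tower e j ⊆ tower e i := by
  rcases eq_or_lt_of_le hji with rfl | hji
  · exact subset_rfl
  · conv_rhs => rw [tower_def]
    refine Set.Subset.trans ?_ (subset_gdHull (tower_arg_null hadd he i))
    exact (subset_iUnion (fun j : Iio i => tower e j) ⟨j, hji⟩).trans subset_union_left

end Tower

/-- Assume `add(N) = cof(N)`. Then there exists a monotone Gδ hull operation on `N`. -/
theorem monotone_Gdelta_hull_on_null_of_add_eq_cof (h : addNull = cofNull) :
    ∃ φ : Set ℝ → Set ℝ, IsMonotoneHullOn NullSets IsGδ φ := by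
  obtain ⟨F, hFnull, hFcof, hFcard⟩ := exists_cof_family
  have hcardeq : Cardinal.mk cofNull.ord.ToType = Cardinal.mk F := by
    rw [Cardinal.mk_toType, Cardinal.card_ord, hFcard]
  obtain ⟨eq⟩ := Cardinal.eq.1 hcardeq
  set e : cofNull.ord.ToType → Set ℝ := fun i => (eq i : Set ℝ) with he_def
  have he : ∀ i, e i ∈ NullSets := fun i => hFnull _ (eq i).2
  -- every null set is below some tower level
  have hexists : ∀ A ∈ NullSets, ∃ i, A ⊆ tower e i := by
    intro A hA
    obtain ⟨B, hBF, hAB⟩ := hFcof A hA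
    obtain ⟨i, hi⟩ := eq.surjective ⟨B, hBF⟩
    refine ⟨i, hAB.trans ?_⟩
    have hei : e i = B := by rw [he_def]; simp [hi]
    exact hei ▸ subset_tower h he i
  classical
  refine ⟨fun A => if hA : ∃ i, A ⊆ tower e i then
    tower e (wellFounded_lt.min {i | A ⊆ tower e i} hA) else ∅, ?_, ?_⟩
  · intro A hA
    have hA' := hexists A hA
    dsimp only
    rw [dif_pos hA']
    have hmin : A ⊆ tower e (wellFounded_lt.min {i | A ⊆ tower e i} hA') :=
      wellFounded_lt.min_mem {i | A ⊆ tower e i} hA'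
    refine ⟨tower_isGδ _, (tower_mem _).1, hmin, ?_⟩
    rw [(tower_mem _).2, hA.2]
  · intro A hA A' hA' hAA'
    have h1 := hexists A hA
    have h2 := hexists A' hA'
    dsimp only
    rw [dif_pos h1, dif_pos h2]
    apply tower_mono h he
    have hmem : wellFounded_lt.min {i | A' ⊆ tower e i} h2 ∈ {i | A ⊆ tower e i} :=
      hAA'.trans (wellFounded_lt.min_mem {i | A' ⊆ tower e i} h2)
    exact le_of_not_gt (wellFounded_lt.not_lt_min {i | A ⊆ tower e i} hmem)
end
end

section
/- Assume that add(N) = cof(N), where N is the class of Lebesgue null subsets of [0,1]. Then there exists a monotone Borel hull operation on N, i.e. a map φ : N → P([0,1]) such that for every A ∈ N the set φ(A) is a Borel subset of [0,1] containing A with λ*(φ(A)) = λ*(A), and A ⊆ A' implies φ(A) ⊆ φ(A'). -/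
open MeasureTheory Set

noncomputable section

/-! ### Auxiliary material -/

/-- Borel hull inside `[0,1]`. -/
def hullSet (S : Set ℝ) : Set ℝ := toMeasurable volume S ∩ Icc 0 1

lemma hullSet_measurable (S : Set ℝ) : MeasurableSet (hullSet S) :=
  (measurableSet_toMeasurable _ _).inter measurableSet_Icc

lemma hullSet_subset_Icc (S : Set ℝ) : hullSet S ⊆ Icc 0 1 := inter_subset_right

lemma subset_hullSet {S T : Set ℝ} (h1 : T ⊆ S) (h2 : T ⊆ Icc 0 1) : T ⊆ hullSet S :=
  subset_inter (h1.trans (subset_toMeasurable _ _)) h2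

lemma volume_hullSet_le (S : Set ℝ) : volume (hullSet S) ≤ volume S :=
  le_trans (measure_mono inter_subset_left) (measure_toMeasurable S).le

variable {ι : Type} [LinearOrder ι] [WellFoundedLT ι]

/-- The increasing chain of Borel null hulls. -/
def chain (B : ι → Set ℝ) : ι → Set ℝ :=
  (wellFounded_lt (α := ι)).fix fun i rec =>
    hullSet (B i ∪ ⋃ j : {j // j < i}, rec j.1 j.2)

lemma chain_eq (B : ι → Set ℝ) (i : ι) :
    chain B i = hullSet (B i ∪ ⋃ j : {j // j < i}, chain B j.1) :=
  WellFounded.fix_eq _ _ _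

lemma chain_measurable (B : ι → Set ℝ) (i : ι) : MeasurableSet (chain B i) := by
  rw [chain_eq]; exact hullSet_measurable _

lemma chain_subset_Icc (B : ι → Set ℝ) (i : ι) : chain B i ⊆ Icc 0 1 := by
  rw [chain_eq]; exact hullSet_subset_Icc _

lemma subset_chain (B : ι → Set ℝ) (hB : ∀ i, B i ⊆ Icc 0 1) (i : ι) : B i ⊆ chain B i := by
  rw [chain_eq]; exact subset_hullSet (subset_union_left) (hB i)

lemma chain_mono_lt (B : ι → Set ℝ) {j i : ι} (hji : j < i) : chain B j ⊆ chain B i := by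
  conv_rhs => rw [chain_eq]
  refine subset_hullSet ?_ (chain_subset_Icc B j)
  exact subset_union_of_subset_right (subset_iUnion (fun k : {k // k < i} => chain B k.1) ⟨j, hji⟩) _

lemma chain_mono (B : ι → Set ℝ) {j i : ι} (hji : j ≤ i) : chain B j ⊆ chain B i := by
  rcases eq_or_lt_of_le hji with rfl | hlt
  · exact le_refl _
  · exact chain_mono_lt B hlt

/-- A union of fewer than `addNull` null subsets of `[0,1]` is null. -/
lemma null_iUnion_of_lt_addNull {α : Type} (g : α → Set ℝ) (hcard : Cardinal.mk α < addNull)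
    (hg : ∀ a, g a ∈ NullSets) : volume (⋃ a, g a) = 0 := by
  by_contra hvol
  have hle : addNull ≤ Cardinal.mk (range g) := by
    apply csInf_le (OrderBot.bddBelow _)
    refine ⟨range g, ?_, ?_, rfl⟩
    · rintro A ⟨a, rfl⟩; exact hg a
    · rwa [sUnion_range]
  exact absurd (hle.trans Cardinal.mk_range_le) (not_le.mpr hcard)

/-- Assume `add(N) = cof(N)`. Then there exists a monotone Borel hull operation on `N`.
(On `ℝ`, `MeasurableSet` is the Borel σ-algebra.) -/
theorem monotone_borel_hull_on_null_of_add_eq_cof (h : addNull = cofNull) :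
    ∃ φ : Set ℝ → Set ℝ, IsMonotoneHullOn NullSets MeasurableSet φ := by
  classical
  -- a cofinal family of minimal cardinality
  have hmem : cofNull ∈ { c | ∃ F : Set (Set ℝ), (∀ A ∈ F, A ∈ NullSets) ∧
      (∀ N ∈ NullSets, ∃ A ∈ F, N ⊆ A) ∧ c = Cardinal.mk F } := by
    apply csInf_mem
    exact ⟨Cardinal.mk NullSets, NullSets, fun A hA => hA,
      fun N hN => ⟨N, hN, le_refl _⟩, rfl⟩
  obtain ⟨F, hFnull, hFcof, hFcard⟩ := hmem
  set ι := cofNull.ord.ToType with hι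
  have hmkι : Cardinal.mk ι = Cardinal.mk F := by
    rw [hι, Cardinal.mk_ord_toType, hFcard]
  obtain ⟨e⟩ := Cardinal.eq.mp hmkι
  set B : ι → Set ℝ := fun i => (e i).1 with hB
  have hBnull : ∀ i, B i ∈ NullSets := fun i => hFnull _ (e i).2
  have hBIcc : ∀ i, B i ⊆ Icc 0 1 := fun i => (hBnull i).1
  -- every initial segment is small
  have hsmall : ∀ i : ι, Cardinal.mk {j : ι // j < i} < addNull := by
    intro i
    rw [h]
    exact Cardinal.mk_Iio_toType_ord_lt i
  -- chain elements are null (by well-founded induction)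
  have hchain_null : ∀ i : ι, volume (chain B i) = 0 := by
    intro i
    induction i using WellFoundedLT.induction with
    | ind i ih =>
      rw [chain_eq]
      refine le_antisymm ?_ zero_le
      refine le_trans (volume_hullSet_le _) ?_
      have h1 : volume (⋃ j : {j : ι // j < i}, chain B j.1) = 0 := by
        refine null_iUnion_of_lt_addNull _ (hsmall i) ?_
        intro j
        exact ⟨chain_subset_Icc B j.1, ih j.1 j.2⟩
      calc volume (B i ∪ ⋃ j : {j : ι // j < i}, chain B j.1)
          ≤ volume (B i) + volume (⋃ j : {j : ι // j < i}, chain B j.1) := measure_union_le _ _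
        _ = 0 := by rw [(hBnull i).2, h1, add_zero]
  have hchain_mem : ∀ i : ι, chain B i ∈ NullSets :=
    fun i => ⟨chain_subset_Icc B i, hchain_null i⟩
  -- the index sets
  have hidx : ∀ A ∈ NullSets, {i : ι | A ⊆ chain B i}.Nonempty := by
    intro A hA
    obtain ⟨A', hA'F, hAA'⟩ := hFcof A hA
    refine ⟨e.symm ⟨A', hA'F⟩, ?_⟩
    have hBe : B (e.symm ⟨A', hA'F⟩) = A' := by rw [hB]; simp
    exact hAA'.trans (hBe.symm.subset.trans (subset_chain B hBIcc _))
  set φ : Set ℝ → Set ℝ := fun A =>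
    if hA : {i : ι | A ⊆ chain B i}.Nonempty then
      chain B ((wellFounded_lt (α := ι)).min _ hA) else ∅ with hφ
  refine ⟨φ, ?_, ?_⟩
  · intro A hA
    rw [hφ]
    simp only [dif_pos (hidx A hA)]
    have hmin := (wellFounded_lt (α := ι)).min_mem _ (hidx A hA)
    refine ⟨chain_measurable B _, chain_subset_Icc B _, hmin, ?_⟩
    rw [hchain_null, hA.2]
  · intro A hA A' hA' hAA'
    rw [hφ]
    simp only [dif_pos (hidx A hA), dif_pos (hidx A' hA')]
    apply chain_mono
    have hm' := (wellFounded_lt (α := ι)).min_mem _ (hidx A' hA')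
    have : (wellFounded_lt (α := ι)).min {i : ι | A' ⊆ chain B i} (hidx A' hA')
        ∈ {i : ι | A ⊆ chain B i} := hAA'.trans hm'
    exact not_lt.mp ((wellFounded_lt (α := ι)).not_lt_min _ this)
end
end

section
/- Suppose that non(N) = ℵ₂ and that there exists a monotone Borel hull operation on N. Then there exists a family (B_α)_{α < ω₂} of Borel subsets of [0,1], indexed by the ordinals below ω₂, which is strictly increasing with respect to inclusion: α < β < ω₂ implies B_α ⊊ B_β. -/
open MeasureTheory Set

noncomputable section

/-- `non(N)`: the least cardinality of a non-null subset of `[0,1]`. -/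
def nonNull : Cardinal :=
  sInf { c | ∃ A : Set ℝ, A ⊆ Icc (0:ℝ) 1 ∧ volume A ≠ 0 ∧ c = Cardinal.mk A }

universe u

/-- A transfinite sequence of reals: at stage `α`, pick (via `Classical.epsilon`) a point of
`[0,1]` not in the `φ`-hull of the set of previously chosen points. -/
def hullSeq (φ : Set ℝ → Set ℝ) : Ordinal.{u} → ℝ :=
  Ordinal.lt_wf.fix fun α ih =>
    Classical.epsilon fun r => r ∈ Icc (0:ℝ) 1 \ φ (Set.range fun β : Iio α => ih β β.2)

theorem hullSeq_eq (φ : Set ℝ → Set ℝ) (α : Ordinal.{u}) :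
    hullSeq φ α = Classical.epsilon
      (fun r => r ∈ Icc (0:ℝ) 1 \ φ (hullSeq φ '' Iio α)) := by
  unfold hullSeq
  rw [Ordinal.lt_wf.fix_eq, ← Set.image_eq_range]

/-- The image of an initial segment of ordinals below `ω₂` has cardinality `< ℵ₂`. -/
theorem mk_image_Iio_lt_aleph_two (x : Ordinal.{u} → ℝ) (α : Ordinal.{u})
    (hα : α < (Cardinal.aleph 2).ord) :
    Cardinal.mk (x '' Iio α) < Cardinal.aleph 2 := by
  have h := Cardinal.mk_image_le_lift (f := x) (s := Iio α)
  rw [Ordinal.mk_Iio_ordinal, Cardinal.lift_lift] at h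
  have h2 : α.card < Cardinal.aleph 2 := Cardinal.lt_ord.mp hα
  have h3 := Cardinal.lift_lt.{u, u+1}.mpr h2
  have h4 := lt_of_le_of_lt h h3
  refine Cardinal.lift_lt.{0, u+1}.mp ?_
  simp only [Cardinal.lift_aleph, Ordinal.lift_ofNat] at h4 ⊢
  exact h4

/-- If `non(N) = ℵ₂` and there is a monotone Borel hull operation on `N`, then there is a
strictly increasing (w.r.t. inclusion) `ω₂`-indexed family of Borel subsets of `[0,1]`. -/
theorem strict_chain_of_borel_hull_of_non_eq_aleph_two
    (hnon : nonNull = Cardinal.aleph 2)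
    (hhull : ∃ φ : Set ℝ → Set ℝ, IsMonotoneHullOn NullSets MeasurableSet φ) :
    ∃ B : Ordinal → Set ℝ,
      (∀ α, α < (Cardinal.aleph 2).ord → MeasurableSet (B α) ∧ B α ⊆ Icc (0:ℝ) 1) ∧
      (∀ α β, α < β → β < (Cardinal.aleph 2).ord → B α ⊂ B β) := by
  obtain ⟨φ, hφ, hφmono⟩ := hhull
  -- every subset of [0,1] of cardinality < ℵ₂ is null
  have hnull : ∀ S : Set ℝ, S ⊆ Icc (0:ℝ) 1 → Cardinal.mk S < Cardinal.aleph 2 →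
      volume S = 0 := by
    intro S hsub hcard
    by_contra h
    have : nonNull ≤ Cardinal.mk S := csInf_le' ⟨S, hsub, h, rfl⟩
    rw [hnon] at this
    exact absurd hcard (not_lt.mpr this)
  set x := hullSeq φ with hx
  -- the set of previously chosen points is a null set (for α < ω₂), and the chosen point
  -- lies in `[0,1]` but outside the hull of the previously chosen points
  have hmain : ∀ α, α < (Cardinal.aleph 2).ord →
      (x '' Iio α ∈ NullSets) ∧ x α ∈ Icc (0:ℝ) 1 \ φ (x '' Iio α) := by
    intro α
    induction α using Ordinal.induction with
    | h α IH =>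
      intro hα
      have hsub : x '' Iio α ⊆ Icc (0:ℝ) 1 := by
        rintro _ ⟨β, hβ, rfl⟩
        exact ((IH β hβ (hβ.trans hα)).2).1
      have hcard : Cardinal.mk (x '' Iio α) < Cardinal.aleph 2 :=
        mk_image_Iio_lt_aleph_two x α hα
      have hN : x '' Iio α ∈ NullSets := ⟨hsub, hnull _ hsub hcard⟩
      obtain ⟨-, hφsub, -, hφvol⟩ := hφ _ hN
      have hne : ∃ r, r ∈ Icc (0:ℝ) 1 \ φ (x '' Iio α) := by
        by_contra h
        push_neg at h
        have hIcc : Icc (0:ℝ) 1 ⊆ φ (x '' Iio α) := fun r hr => by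
          by_contra hr'; exact h r ⟨hr, hr'⟩
        have : volume (Icc (0:ℝ) 1) ≤ volume (φ (x '' Iio α)) :=
          measure_mono hIcc
        rw [hφvol, hN.2, Real.volume_Icc] at this
        simp at this
      refine ⟨hN, ?_⟩
      rw [hx, hullSeq_eq]
      exact Classical.epsilon_spec hne
  refine ⟨fun α => φ (x '' Iio α), fun α hα => ?_, fun α β hαβ hβ => ?_⟩
  · obtain ⟨hmeas, hsub, -, -⟩ := hφ _ (hmain α hα).1
    exact ⟨hmeas, hsub⟩
  · have hα : α < (Cardinal.aleph 2).ord := hαβ.trans hβ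
    have hsub : φ (x '' Iio α) ⊆ φ (x '' Iio β) :=
      hφmono _ (hmain α hα).1 _ (hmain β hβ).1 (image_mono (Iio_subset_Iio hαβ.le))
    refine ⟨hsub, fun hba => ?_⟩
    have hxmem : x α ∈ φ (x '' Iio β) :=
      (hφ _ (hmain β hβ).1).2.2.1 ⟨α, hαβ, rfl⟩
    exact (hmain α hα).2.2 (hba hxmem)
end
end

section
/- Let H ⊆ ℝ be arbitrary and let cl_d(H) denote the closure of H in the density topology of ℝ. Then every Lebesgue measurable subset of cl_d(H) \ H is Lebesgue null; in particular, cl_d(H) is a hull of H. -/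
open MeasureTheory Set Filter

noncomputable section

/-- A set `U ⊆ ℝ` is open in the density topology: it is Lebesgue measurable
(i.e. measurable w.r.t. the completion of the Borel σ-algebra, expressed via
`NullMeasurableSet`) and every point of `U` is a Lebesgue density point of `U`. -/
def DensityOpen (U : Set ℝ) : Prop :=
  NullMeasurableSet U volume ∧ ∀ x ∈ U,
    Tendsto (fun r : ℝ => volume (U ∩ Icc (x - r) (x + r)) / ENNReal.ofReal (2 * r))
      (nhdsWithin 0 (Ioi 0)) (nhds 1)

/-- The closure of `H` in the density topology: the smallest density-closed set
containing `H`. -/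
def densityClosure (H : Set ℝ) : Set ℝ :=
  ⋂₀ {F | DensityOpen Fᶜ ∧ H ⊆ F}

/-- For every `H ⊆ ℝ`, the density-topology closure of `H` is a hull of `H`:
it contains `H`, and every Lebesgue measurable subset of `cl_d(H) \ H` is null. -/
theorem densityClosure_is_hull (H : Set ℝ) :
    H ⊆ densityClosure H ∧
    ∀ L : Set ℝ, NullMeasurableSet L volume → L ⊆ densityClosure H \ H →
      volume L = 0 := by
  constructor
  · exact fun x hx F hF => hF.2 hx
  · intro L hL hLsub
    -- get a measurable subset S of L of full measure in L
    obtain ⟨S, hSsub, hSmeas, hSae⟩ := hL.exists_measurable_subset_ae_eq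
    -- density points of S
    set Φ : Set ℝ := {x | Tendsto
        (fun r : ℝ => volume (S ∩ Icc (x - r) (x + r)) / ENNReal.ofReal (2 * r))
        (nhdsWithin 0 (Ioi 0)) (nhds 1)} with hΦ
    have hae : ∀ᵐ x ∂(volume : Measure ℝ).restrict S, x ∈ Φ := by
      filter_upwards [Besicovitch.ae_tendsto_measure_inter_div (volume : Measure ℝ) S]
        with x hx
      have heq : ∀ r : ℝ, volume (S ∩ Metric.closedBall x r) / volume (Metric.closedBall x r)
          = volume (S ∩ Icc (x - r) (x + r)) / ENNReal.ofReal (2 * r) := by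
        intro r
        rw [Real.closedBall_eq_Icc, Real.volume_Icc]
        ring_nf
      simpa only [heq, hΦ, mem_setOf_eq] using hx
    have hnull : volume (S \ Φ) = 0 := by
      have h := (ae_restrict_iff'₀ hSmeas.nullMeasurableSet).mp hae
      refine measure_mono_null (fun x hx => ?_) (ae_iff.mp h)
      simp only [mem_setOf_eq, Classical.not_imp]
      exact ⟨hx.1, hx.2⟩
    set V : Set ℝ := S ∩ Φ with hV
    have hVS : V ⊆ S := inter_subset_left
    -- measures of V-slices agree with S-slices
    have hslice : ∀ T : Set ℝ, volume (S ∩ T) = volume (V ∩ T) := by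
      intro T
      refine le_antisymm ?_ (measure_mono (inter_subset_inter_left T hVS))
      calc volume (S ∩ T) ≤ volume ((V ∩ T) ∪ (S \ Φ)) :=
            measure_mono (fun x hx => by
              by_cases h : x ∈ Φ
              · exact Or.inl ⟨⟨hx.1, h⟩, hx.2⟩
              · exact Or.inr ⟨hx.1, h⟩)
        _ ≤ volume (V ∩ T) + volume (S \ Φ) := measure_union_le _ _
        _ = volume (V ∩ T) := by rw [hnull, add_zero]
    -- V is density open
    have hVopen : DensityOpen V := by
      constructor
      · have : V = S \ (S \ Φ) := by
          ext x
          simp only [hV, mem_inter_iff, mem_diff]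
          tauto
        rw [this]
        exact hSmeas.nullMeasurableSet.diff (NullMeasurableSet.of_null hnull)
      · intro x hx
        have hxΦ : x ∈ Φ := hx.2
        have : ∀ r : ℝ, volume (S ∩ Icc (x - r) (x + r)) / ENNReal.ofReal (2 * r)
            = volume (V ∩ Icc (x - r) (x + r)) / ENNReal.ofReal (2 * r) := by
          intro r; rw [hslice]
        have h2 : Tendsto (fun r : ℝ =>
            volume (S ∩ Icc (x - r) (x + r)) / ENNReal.ofReal (2 * r))
            (nhdsWithin 0 (Ioi 0)) (nhds 1) := hxΦ
        simpa only [this] using h2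
    -- V avoids H, so densityClosure H ⊆ Vᶜ, forcing V = ∅
    have hVcl : densityClosure H ⊆ Vᶜ := by
      refine sInter_subset_of_mem ⟨?_, ?_⟩
      · rw [compl_compl]; exact hVopen
      · intro x hx hxV
        exact ((hLsub (hSsub (hVS hxV))).2 hx).elim
    have hVempty : V = ∅ := by
      by_contra h
      obtain ⟨x, hx⟩ := nonempty_iff_ne_empty.mpr h
      exact hVcl (hLsub (hSsub (hVS hx))).1 hx
    have hS0 : volume S = 0 := by
      have := hslice univ
      simp [hVempty] at this
      simpa using this
    calc volume L = volume S := (measure_congr hSae).symm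
      _ = 0 := hS0
end
end

section
/- There exists a monotone Borel hull operation on P([0,1]) (the class of all subsets of [0,1]) if and only if there exists a monotone Borel hull operation on L, the class of Lebesgue measurable subsets of [0,1]. -/
open MeasureTheory Set Metric Filter Topology ENNReal

noncomputable section

def Dset (A : Set ℝ) : Set ℝ :=
  {x | Tendsto (fun n : ℕ =>
      volume (A ∩ closedBall x (1/(n+1 : ℝ))) / volume (closedBall x (1/(n+1 : ℝ)))) atTop (𝓝 1)}

lemma mem_Dset_iff {A : Set ℝ} {x : ℝ} : x ∈ Dset A ↔ Tendsto (fun n : ℕ =>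
      volume (A ∩ closedBall x (1/(n+1 : ℝ))) / volume (closedBall x (1/(n+1 : ℝ)))) atTop (𝓝 1) :=
  Iff.rfl

lemma ratio_le_one (S : Set ℝ) (x r : ℝ) :
    volume (S ∩ closedBall x r) / volume (closedBall x r) ≤ 1 :=
  ENNReal.div_le_of_le_mul (by rw [one_mul]; exact measure_mono inter_subset_right)

lemma Dset_mono {A B : Set ℝ} (h : A ⊆ B) : Dset A ⊆ Dset B := by
  intro x hx
  rw [mem_Dset_iff] at hx ⊢
  refine tendsto_of_tendsto_of_tendsto_of_le_of_le hx tendsto_const_nhds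
    (fun n => ENNReal.div_le_div_right
      (measure_mono (inter_subset_inter_left _ h)) _)
    (fun n => ratio_le_one B x _)

lemma meas_inter_closedBall (H : Set ℝ) (hH : MeasurableSet H) (r : ℝ) :
    Measurable fun x => volume (H ∩ closedBall x r) := by
  have key : ∀ x : ℝ, H ∩ closedBall x r
      = Prod.mk x ⁻¹' {p : ℝ × ℝ | p.2 ∈ H ∧ dist p.2 p.1 ≤ r} := by
    intro x
    ext y
    simp [mem_closedBall, and_comm]
  have hs : MeasurableSet {p : ℝ × ℝ | p.2 ∈ H ∧ dist p.2 p.1 ≤ r} :=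
    (hH.preimage measurable_snd).inter
      (measurableSet_le ((continuous_dist.comp (continuous_snd.prodMk continuous_fst)).measurable)
        measurable_const)
  simp only [key]
  exact measurable_measure_prodMk_left (ν := volume) hs

lemma Dset_measurable (A : Set ℝ) : MeasurableSet (Dset A) := by
  have hrw : ∀ (x : ℝ) (r : ℝ), volume (A ∩ closedBall x r)
      = volume (toMeasurable volume A ∩ closedBall x r) := fun x r =>
    (Measure.measure_toMeasurable_inter_of_sFinite measurableSet_closedBall A).symm
  have : Dset A = {x | Tendsto (fun n : ℕ =>
      (fun y => volume (toMeasurable volume A ∩ closedBall y (1/(n+1 : ℝ)))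
        / ENNReal.ofReal (2 * (1/(n+1 : ℝ)))) x) atTop (𝓝 1)} := by
    ext x
    simp only [Dset, mem_setOf_eq, hrw, Real.volume_closedBall]
  rw [this]
  exact measurableSet_tendsto (𝓝 1) fun n =>
    ((meas_inter_closedBall _ (measurableSet_toMeasurable _ _) _).div measurable_const)

lemma seq_tendsto : Tendsto (fun n : ℕ => 1/(n+1 : ℝ)) atTop (𝓝[>] 0) := by
  refine tendsto_nhdsWithin_of_tendsto_nhds_of_eventually_within _
    tendsto_one_div_add_atTop_nhds_zero_nat ?_
  filter_upwards with n
  have : (0:ℝ) < 1/(n+1 : ℝ) := by positivity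
  exact this

/-- a.e., membership in `Dset A` agrees with membership in `toMeasurable volume A`. -/
lemma Dset_ae (A : Set ℝ) :
    ∀ᵐ x ∂(volume : Measure ℝ), (x ∈ Dset A ↔ x ∈ toMeasurable volume A) := by
  set H := toMeasurable volume A with hHdef
  have hH : MeasurableSet H := measurableSet_toMeasurable _ _
  filter_upwards [Besicovitch.ae_tendsto_measure_inter_div_of_measurableSet volume hH] with x hx
  have hrw : ∀ r : ℝ, volume (A ∩ closedBall x r) = volume (H ∩ closedBall x r) := fun r =>
    (Measure.measure_toMeasurable_inter_of_sFinite measurableSet_closedBall A).symm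
  have hseq : Tendsto (fun n : ℕ =>
      volume (A ∩ closedBall x (1/(n+1 : ℝ))) / volume (closedBall x (1/(n+1 : ℝ)))) atTop
      (𝓝 (H.indicator 1 x)) := by
    have := hx.comp seq_tendsto
    simpa [Function.comp_def, hrw] using this
  rw [mem_Dset_iff]
  constructor
  · intro hxD
    by_contra hxH
    have h0 : H.indicator (1 : ℝ → ℝ≥0∞) x = 0 := indicator_of_notMem hxH 1
    have := tendsto_nhds_unique hxD hseq
    rw [h0] at this
    exact one_ne_zero this
  · intro hxH
    have h1 : H.indicator (1 : ℝ → ℝ≥0∞) x = 1 := indicator_of_mem hxH 1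
    rw [h1] at hseq
    exact hseq

lemma Dset_diff_null (A : Set ℝ) :
    volume (Dset A \ toMeasurable volume A) = 0 ∧
    volume (toMeasurable volume A \ Dset A) = 0 := by
  have h := Dset_ae A
  rw [ae_iff] at h
  constructor <;> refine measure_mono_null ?_ h <;> intro x hx <;>
    simp only [mem_diff] at hx <;> simp only [mem_setOf_eq] <;> tauto

/-- A monotone null-measurable hull operation. -/
def Mhull (A : Set ℝ) : Set ℝ := A ∪ (Dset A ∩ Icc (0:ℝ) 1)

lemma Mhull_mono {A B : Set ℝ} (h : A ⊆ B) : Mhull A ⊆ Mhull B :=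
  union_subset_union h (inter_subset_inter_left _ (Dset_mono h))

lemma subset_Mhull (A : Set ℝ) : A ⊆ Mhull A := subset_union_left

lemma Mhull_subset {A : Set ℝ} (h : A ⊆ Icc (0:ℝ) 1) : Mhull A ⊆ Icc (0:ℝ) 1 :=
  union_subset h inter_subset_right

lemma A_diff_Dset_null (A : Set ℝ) : volume (A \ Dset A) = 0 :=
  measure_mono_null (diff_subset_diff_left (subset_toMeasurable _ _)) (Dset_diff_null A).2

lemma Mhull_nullMeasurable {A : Set ℝ} (hA : A ⊆ Icc (0:ℝ) 1) :
    NullMeasurableSet (Mhull A) volume := by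
  have h1 : NullMeasurableSet (Dset A ∩ Icc (0:ℝ) 1) volume :=
    ((Dset_measurable A).inter measurableSet_Icc).nullMeasurableSet
  have h2 : volume (A \ (Dset A ∩ Icc (0:ℝ) 1)) = 0 := by
    refine measure_mono_null (fun x hx => ?_) (A_diff_Dset_null A)
    rcases hx with ⟨hxA, hxn⟩
    exact ⟨hxA, fun hD => hxn ⟨hD, hA hxA⟩⟩
  have : Mhull A = (Dset A ∩ Icc (0:ℝ) 1) ∪ (A \ (Dset A ∩ Icc (0:ℝ) 1)) := by
    rw [union_diff_self]
    exact (union_comm _ _)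
  rw [this]
  exact h1.union (NullMeasurableSet.of_null h2)

lemma Mhull_volume (A : Set ℝ) : volume (Mhull A) = volume A := by
  have hle : volume (Mhull A) ≤ volume A := by
    have hsub : Mhull A ⊆ toMeasurable volume A ∪ (Dset A \ toMeasurable volume A) := by
      intro x hx
      rcases hx with hx | hx
      · exact Or.inl (subset_toMeasurable _ _ hx)
      · by_cases h : x ∈ toMeasurable volume A
        · exact Or.inl h
        · exact Or.inr ⟨hx.1, h⟩
    calc volume (Mhull A) ≤ volume (toMeasurable volume A ∪ (Dset A \ toMeasurable volume A)) :=
          measure_mono hsub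
      _ ≤ volume (toMeasurable volume A) + volume (Dset A \ toMeasurable volume A) :=
          measure_union_le _ _
      _ = volume (toMeasurable volume A) := by rw [(Dset_diff_null A).1, add_zero]
      _ = volume A := measure_toMeasurable A
  exact le_antisymm hle (measure_mono (subset_Mhull A))

/-- The class of Lebesgue measurable subsets of `[0,1]` (Lebesgue measurable =
measurable w.r.t. the completion of the Borel σ-algebra, i.e. `NullMeasurableSet`). -/
def LebSets : Set (Set ℝ) := {A | A ⊆ Icc (0:ℝ) 1 ∧ NullMeasurableSet A volume}

/-- The class of all subsets of `[0,1]`. -/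
def AllSets : Set (Set ℝ) := {A | A ⊆ Icc (0:ℝ) 1}

/-- There is a monotone Borel hull operation on all subsets of `[0,1]` iff there is one
on the Lebesgue measurable subsets of `[0,1]`. -/
theorem monotone_borel_hull_all_iff_measurable :
    (∃ φ : Set ℝ → Set ℝ, IsMonotoneHullOn AllSets MeasurableSet φ) ↔
    (∃ φ : Set ℝ → Set ℝ, IsMonotoneHullOn LebSets MeasurableSet φ) := by
  constructor
  · rintro ⟨φ, hφ⟩
    exact ⟨φ, fun A hA => hφ.1 A hA.1, fun A hA A' hA' h => hφ.2 A hA.1 A' hA'.1 h⟩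
  · rintro ⟨φ, hφ⟩
    refine ⟨fun A => φ (Mhull A), ?_, ?_⟩
    · intro A hA
      have hAsub : A ⊆ Icc (0:ℝ) 1 := hA
      have hM : Mhull A ∈ LebSets := ⟨Mhull_subset hAsub, Mhull_nullMeasurable hAsub⟩
      obtain ⟨hGood, hsub, hcontains, hvol⟩ := hφ.1 _ hM
      exact ⟨hGood, hsub, (subset_Mhull A).trans hcontains, by rw [hvol, Mhull_volume]⟩
    · intro A hA A' hA' h
      exact hφ.2 _ ⟨Mhull_subset hA, Mhull_nullMeasurable hA⟩ _
        ⟨Mhull_subset hA', Mhull_nullMeasurable hA'⟩ (Mhull_mono h)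
end
end

section
/- There exists a monotone G_δ hull operation on P([0,1]) (the class of all subsets of [0,1]) if and only if there exists a monotone G_δ hull operation on L, the class of Lebesgue measurable subsets of [0,1]. -/
open MeasureTheory Set

open Filter Metric Topology

open scoped ENNReal

noncomputable section

/-- The set of "density points" of an arbitrary set `A` (computed with the Lebesgue
outer measure), restricted to `[0,1]`. This is a canonical, monotone choice of a
"measurable version" of `A`: it coincides, up to a null set, with any measurable hull
of `A` intersected with `[0,1]`. -/
def Kset (A : Set ℝ) : Set ℝ :=
  Icc (0:ℝ) 1 ∩ {x | 1 ≤ liminf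
    (fun r => volume (A ∩ closedBall x r) / volume (closedBall x r)) (𝓝[>] (0:ℝ))}

lemma Kset_subset (A : Set ℝ) : Kset A ⊆ Icc (0:ℝ) 1 := fun _ hx => hx.1

lemma Kset_mono {A B : Set ℝ} (h : A ⊆ B) : Kset A ⊆ Kset B := by
  rintro x ⟨hxI, hxl⟩
  refine ⟨hxI, ?_⟩
  simp only [mem_setOf_eq] at hxl ⊢
  refine le_trans hxl (liminf_le_liminf (Eventually.of_forall fun r => ?_))
  exact ENNReal.div_le_div_right (measure_mono (inter_subset_inter_left _ h)) _

/-- `A ∪ Kset A` agrees almost everywhere with `toMeasurable volume A ∩ [0,1]`.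
This uses the Lebesgue density theorem (via Besicovitch covering) applied to the
measurable hull `toMeasurable volume A`, together with the fact that for a σ-finite
measure, `μ (toMeasurable μ A ∩ t) = μ (A ∩ t)` for measurable `t`. -/
lemma ae_eq_main {A : Set ℝ} (hA : A ⊆ Icc (0:ℝ) 1) :
    ((A ∪ Kset A : Set ℝ) : Set ℝ) =ᵐ[volume]
      ((toMeasurable volume A ∩ Icc (0:ℝ) 1 : Set ℝ) : Set ℝ) := by
  set H := toMeasurable volume A with hHdef
  have hHm : MeasurableSet H := measurableSet_toMeasurable _ _
  have hAH : A ⊆ H := subset_toMeasurable _ _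
  have key : ∀ᵐ x ∂(volume : Measure ℝ),
      Tendsto (fun r => volume (A ∩ closedBall x r) / volume (closedBall x r)) (𝓝[>] 0)
        (𝓝 (H.indicator 1 x)) := by
    filter_upwards [Besicovitch.ae_tendsto_measure_inter_div_of_measurableSet
      (volume : Measure ℝ) hHm] with x hx
    have heq : (fun r => volume (A ∩ closedBall x r) / volume (closedBall x r))
        = (fun r => volume (H ∩ closedBall x r) / volume (closedBall x r)) := by
      funext r
      rw [Measure.measure_toMeasurable_inter_of_sFinite measurableSet_closedBall]
    rw [heq]
    exact hx
  rw [Filter.eventuallyEq_set]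
  filter_upwards [key] with x hx
  constructor
  · rintro (hxA | hxK)
    · exact ⟨hAH hxA, hA hxA⟩
    · refine ⟨?_, hxK.1⟩
      by_contra hxH
      have h0 : H.indicator (1 : ℝ → ℝ≥0∞) x = 0 := indicator_of_notMem hxH _
      rw [h0] at hx
      have hl := hx.liminf_eq
      have hxK2 := hxK.2
      simp only [mem_setOf_eq] at hxK2
      rw [hl] at hxK2
      exact absurd hxK2 (by simp)
  · rintro ⟨hxH, hxI⟩
    right
    refine ⟨hxI, ?_⟩
    have h1 : H.indicator (1 : ℝ → ℝ≥0∞) x = 1 := indicator_of_mem hxH _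
    rw [h1] at hx
    simp only [mem_setOf_eq]
    rw [hx.liminf_eq]

/-- For any `A ⊆ [0,1]`, the set `A ∪ Kset A` is a Lebesgue measurable subset of `[0,1]`
with the same outer measure as `A`. -/
lemma union_Kset_mem_LebSets {A : Set ℝ} (hA : A ⊆ Icc (0:ℝ) 1) :
    (A ∪ Kset A) ∈ LebSets ∧ volume (A ∪ Kset A) = volume A := by
  have hae := ae_eq_main hA
  have hsub : A ∪ Kset A ⊆ Icc (0:ℝ) 1 := union_subset hA (Kset_subset A)
  have hm : MeasurableSet (toMeasurable volume A ∩ Icc (0:ℝ) 1) :=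
    (measurableSet_toMeasurable _ _).inter measurableSet_Icc
  have hnm : NullMeasurableSet (A ∪ Kset A) volume :=
    hm.nullMeasurableSet.congr hae.symm
  have hvol : volume (A ∪ Kset A) = volume A := by
    have h1 : volume (A ∪ Kset A) = volume (toMeasurable volume A ∩ Icc (0:ℝ) 1) :=
      measure_congr hae
    refine le_antisymm ?_ (measure_mono subset_union_left)
    rw [h1]
    calc volume (toMeasurable volume A ∩ Icc (0:ℝ) 1)
        ≤ volume (toMeasurable volume A) := measure_mono inter_subset_left
      _ = volume A := measure_toMeasurable A
  exact ⟨⟨hsub, hnm⟩, hvol⟩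

/-- There is a monotone Gδ hull operation on all subsets of `[0,1]` iff there is one
on the Lebesgue measurable subsets of `[0,1]`. -/
theorem monotone_Gdelta_hull_all_iff_measurable :
    (∃ φ : Set ℝ → Set ℝ, IsMonotoneHullOn AllSets IsGδ φ) ↔
    (∃ φ : Set ℝ → Set ℝ, IsMonotoneHullOn LebSets IsGδ φ) := by
  constructor
  · rintro ⟨φ, h1, h2⟩
    exact ⟨φ, fun A hA => h1 A hA.1, fun A hA A' hA' => h2 A hA.1 A' hA'.1⟩
  · rintro ⟨φ, h1, h2⟩
    refine ⟨fun A => φ (A ∪ Kset A), fun A hA => ?_, fun A hA A' hA' hAA' => ?_⟩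
    · obtain ⟨hmem, hvol⟩ := union_Kset_mem_LebSets hA
      obtain ⟨hg, hsub, hsub2, hv⟩ := h1 _ hmem
      exact ⟨hg, hsub, subset_union_left.trans hsub2, by rw [hv, hvol]⟩
    · exact h2 _ (union_Kset_mem_LebSets hA).1 _ (union_Kset_mem_LebSets hA').1
        (union_subset_union hAA' (Kset_mono hAA'))
end
end

section
/- Assume the Continuum Hypothesis (2^{ℵ₀} = ℵ₁). Then there exists a monotone Borel hull operation on L, the class of Lebesgue measurable subsets of [0,1]: a map φ : L → P([0,1]) such that φ(M) is a Borel set containing M with λ(φ(M)) = λ(M) for every M ∈ L, and M ⊆ M' implies φ(M) ⊆ φ(M'). -/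
open MeasureTheory Set

noncomputable section

namespace MBH

open Filter Topology
open scoped ENNReal NNReal

/-! ### The density-point operator -/

/-- A discretized version of the set of Lebesgue density points of `S`. -/
def dd (S : Set ℝ) : Set ℝ :=
  {x : ℝ | ∀ n : ℕ, ∃ m : ℕ, ∀ q : ℚ, 0 < q → (q : ℝ) < 1 / ((m : ℝ) + 1) →
    ENNReal.ofReal ((1 - 1 / ((n : ℝ) + 1)) * (2 * (q : ℝ)))
      ≤ volume (S ∩ Metric.closedBall x (q : ℝ))}

lemma vol_ball_mono {S S' : Set ℝ} (h : volume (S \ S') = 0) (x r : ℝ) :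
    volume (S ∩ Metric.closedBall x r) ≤ volume (S' ∩ Metric.closedBall x r) := by
  calc volume (S ∩ Metric.closedBall x r)
      ≤ volume ((S' ∩ Metric.closedBall x r) ∪ (S \ S')) := by
        apply measure_mono; rintro z ⟨hzS, hzB⟩
        by_cases hz : z ∈ S'
        · exact Or.inl ⟨hz, hzB⟩
        · exact Or.inr ⟨hzS, hz⟩
    _ ≤ volume (S' ∩ Metric.closedBall x r) + volume (S \ S') := measure_union_le _ _
    _ = volume (S' ∩ Metric.closedBall x r) := by rw [h, add_zero]

lemma dd_mono_null {S S' : Set ℝ} (h : volume (S \ S') = 0) : dd S ⊆ dd S' := by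
  intro x hx n
  obtain ⟨m, hm⟩ := hx n
  exact ⟨m, fun q hq hq' => (hm q hq hq').trans (vol_ball_mono h x q)⟩

lemma dd_congr {S S' : Set ℝ} (h : S =ᵐ[volume] S') : dd S = dd S' := by
  have h' := (ae_eq_set.1 h)
  exact subset_antisymm (dd_mono_null h'.1) (dd_mono_null h'.2)

lemma vol_ball_move (S : Set ℝ) (q : ℝ) (x y : ℝ) :
    volume (S ∩ Metric.closedBall y q) ≤
      volume (S ∩ Metric.closedBall x q) + ENNReal.ofReal |y - x| + ENNReal.ofReal |y - x| := by
  have h1 : x - y ≤ |y - x| := by rw [abs_sub_comm]; exact le_abs_self _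
  have h2 : y - x ≤ |y - x| := le_abs_self _
  have hsub : S ∩ Metric.closedBall y q ⊆
      (S ∩ Metric.closedBall x q) ∪
        (Icc (x - q - |y - x|) (x - q) ∪ Icc (x + q) (x + q + |y - x|)) := by
    rintro z ⟨hzS, hzB⟩
    rw [Real.closedBall_eq_Icc, mem_Icc] at hzB
    by_cases hc1 : z < x - q
    · exact Or.inr (Or.inl ⟨by linarith [hzB.1], le_of_lt hc1⟩)
    · by_cases hc2 : x + q < z
      · exact Or.inr (Or.inr ⟨le_of_lt hc2, by linarith [hzB.2]⟩)
      · refine Or.inl ⟨hzS, ?_⟩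
        rw [Real.closedBall_eq_Icc, mem_Icc]
        constructor <;> linarith
  calc volume (S ∩ Metric.closedBall y q)
      ≤ volume ((S ∩ Metric.closedBall x q) ∪
          (Icc (x - q - |y - x|) (x - q) ∪ Icc (x + q) (x + q + |y - x|))) := measure_mono hsub
    _ ≤ volume (S ∩ Metric.closedBall x q) +
          volume (Icc (x - q - |y - x|) (x - q) ∪ Icc (x + q) (x + q + |y - x|)) :=
        measure_union_le _ _
    _ ≤ volume (S ∩ Metric.closedBall x q) +
          (volume (Icc (x - q - |y - x|) (x - q)) + volume (Icc (x + q) (x + q + |y - x|))) := by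
        gcongr
        exact measure_union_le _ _
    _ = volume (S ∩ Metric.closedBall x q) + ENNReal.ofReal |y - x| + ENNReal.ofReal |y - x| := by
        rw [Real.volume_Icc, Real.volume_Icc]
        have e1 : x - q - (x - q - |y - x|) = |y - x| := by ring
        have e2 : x + q + |y - x| - (x + q) = |y - x| := by ring
        rw [e1, e2, add_assoc]

lemma isClosed_level (S : Set ℝ) (q : ℝ) (c : ℝ≥0∞) (hc : c ≠ ⊤) :
    IsClosed {x : ℝ | c ≤ volume (S ∩ Metric.closedBall x q)} := by
  rw [← isOpen_compl_iff, Metric.isOpen_iff]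
  intro x hx
  simp only [mem_compl_iff, mem_setOf_eq, not_le] at hx
  have hVne : volume (S ∩ Metric.closedBall x q) ≠ ⊤ := hx.ne_top
  have hc0 : c ≠ 0 := by
    intro h0
    rw [h0] at hx
    exact absurd hx (by simp)
  have hlt : (volume (S ∩ Metric.closedBall x q)).toReal < c.toReal :=
    (ENNReal.toReal_lt_toReal hVne hc).2 hx
  set ε : ℝ := (c.toReal - (volume (S ∩ Metric.closedBall x q)).toReal) / 3 with hε
  have hεpos : 0 < ε := by rw [hε]; linarith
  refine ⟨ε, hεpos, ?_⟩
  intro y hy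
  rw [Metric.mem_ball, Real.dist_eq] at hy
  simp only [mem_compl_iff, mem_setOf_eq, not_le]
  calc volume (S ∩ Metric.closedBall y q)
      ≤ volume (S ∩ Metric.closedBall x q) + ENNReal.ofReal |y - x| + ENNReal.ofReal |y - x| :=
        vol_ball_move S q x y
    _ ≤ volume (S ∩ Metric.closedBall x q) + ENNReal.ofReal ε + ENNReal.ofReal ε := by
        gcongr <;> exact ENNReal.ofReal_le_ofReal hy.le
    _ < c := by
        rw [← ENNReal.ofReal_toReal hVne, ← ENNReal.ofReal_add (by positivity) hεpos.le,
          ← ENNReal.ofReal_add (by positivity) hεpos.le, ← ENNReal.ofReal_toReal hc]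
        refine (ENNReal.ofReal_lt_ofReal_iff_of_nonneg (by positivity)).2 ?_
        rw [hε]; linarith

lemma measurableSet_dd (S : Set ℝ) : MeasurableSet (dd S) := by
  have hdd : dd S = ⋂ n : ℕ, ⋃ m : ℕ, ⋂ q : ℚ,
      {x : ℝ | 0 < q → (q : ℝ) < 1 / ((m : ℝ) + 1) →
        ENNReal.ofReal ((1 - 1 / ((n : ℝ) + 1)) * (2 * (q : ℝ)))
          ≤ volume (S ∩ Metric.closedBall x (q : ℝ))} := by
    ext x
    simp only [dd, mem_setOf_eq, mem_iInter, mem_iUnion]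
  rw [hdd]
  refine MeasurableSet.iInter fun n => MeasurableSet.iUnion fun m => MeasurableSet.iInter fun q => ?_
  by_cases h1 : 0 < q
  · by_cases h2 : (q : ℝ) < 1 / ((m : ℝ) + 1)
    · have he : {x : ℝ | 0 < q → (q : ℝ) < 1 / ((m : ℝ) + 1) →
          ENNReal.ofReal ((1 - 1 / ((n : ℝ) + 1)) * (2 * (q : ℝ)))
            ≤ volume (S ∩ Metric.closedBall x (q : ℝ))} =
          {x : ℝ | ENNReal.ofReal ((1 - 1 / ((n : ℝ) + 1)) * (2 * (q : ℝ)))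
            ≤ volume (S ∩ Metric.closedBall x (q : ℝ))} := by
        ext x
        simp only [mem_setOf_eq]
        exact ⟨fun h => h h1 h2, fun h _ _ => h⟩
      rw [he]
      exact (isClosed_level S q _ ENNReal.ofReal_ne_top).measurableSet
    · have he : {x : ℝ | 0 < q → (q : ℝ) < 1 / ((m : ℝ) + 1) →
          ENNReal.ofReal ((1 - 1 / ((n : ℝ) + 1)) * (2 * (q : ℝ)))
            ≤ volume (S ∩ Metric.closedBall x (q : ℝ))} = univ := by
        ext x
        simp only [mem_setOf_eq, mem_univ, iff_true]
        intro _ h2'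
        exact absurd h2' h2
      rw [he]; exact MeasurableSet.univ
  · have he : {x : ℝ | 0 < q → (q : ℝ) < 1 / ((m : ℝ) + 1) →
        ENNReal.ofReal ((1 - 1 / ((n : ℝ) + 1)) * (2 * (q : ℝ)))
          ≤ volume (S ∩ Metric.closedBall x (q : ℝ))} = univ := by
      ext x
      simp only [mem_setOf_eq, mem_univ, iff_true]
      intro h1' _
      exact absurd h1' h1
    rw [he]; exact MeasurableSet.univ

lemma mem_dd_of_tendsto {t : Set ℝ} {x : ℝ}
    (h : Tendsto (fun r => volume (t ∩ Metric.closedBall x r) / volume (Metric.closedBall x r))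
      (𝓝[>] 0) (𝓝 1)) :
    x ∈ dd t := by
  intro n
  have han : (0:ℝ) < 1 / ((n : ℝ) + 1) := by positivity
  have ha0 : (0:ℝ) ≤ 1 - 1 / ((n : ℝ) + 1) := by
    have : 1 / ((n : ℝ) + 1) ≤ 1 := by
      rw [div_le_one (by positivity)]
      have : (0:ℝ) ≤ (n:ℝ) := Nat.cast_nonneg n
      linarith
    linarith
  have ha1 : (1:ℝ) - 1 / ((n : ℝ) + 1) < 1 := by linarith
  have hIoi : Ioi (ENNReal.ofReal (1 - 1 / ((n : ℝ) + 1))) ∈ 𝓝 (1 : ℝ≥0∞) :=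
    Ioi_mem_nhds (ENNReal.ofReal_lt_one.2 ha1)
  have h2 := h hIoi
  rw [Filter.mem_map, mem_nhdsGT_iff_exists_Ioo_subset] at h2
  obtain ⟨δ, hδ, hsub⟩ := h2
  rw [mem_Ioi] at hδ
  obtain ⟨m, hm⟩ := exists_nat_one_div_lt hδ
  refine ⟨m, fun q hq hq' => ?_⟩
  have hq0 : (0:ℝ) < (q : ℝ) := by exact_mod_cast hq
  have hmem : (q : ℝ) ∈ Ioo (0:ℝ) δ := ⟨hq0, hq'.trans hm⟩
  have h3 := hsub hmem
  simp only [mem_preimage, mem_Ioi] at h3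
  rw [Real.volume_closedBall] at h3
  have hb0 : ENNReal.ofReal (2 * (q : ℝ)) ≠ 0 := by
    rw [Ne, ENNReal.ofReal_eq_zero, not_le]
    linarith
  have h4 := (ENNReal.le_div_iff_mul_le (Or.inl hb0) (Or.inl ENNReal.ofReal_ne_top)).1 h3.le
  rw [ENNReal.ofReal_mul ha0]
  exact h4

lemma not_mem_dd_of_tendsto_zero {t : Set ℝ} {x : ℝ}
    (h : Tendsto (fun r => volume (t ∩ Metric.closedBall x r) / volume (Metric.closedBall x r))
      (𝓝[>] 0) (𝓝 0)) :
    x ∉ dd t := by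
  intro hx
  obtain ⟨m, hm⟩ := hx 1
  have hIio : Iio (ENNReal.ofReal (1/4)) ∈ 𝓝 (0 : ℝ≥0∞) :=
    Iio_mem_nhds (by rw [ENNReal.ofReal_pos]; norm_num)
  have h2 := h hIio
  rw [Filter.mem_map, mem_nhdsGT_iff_exists_Ioo_subset] at h2
  obtain ⟨δ, hδ, hsub⟩ := h2
  rw [mem_Ioi] at hδ
  have hpos : (0:ℝ) < min δ (1 / ((m : ℝ) + 1)) := lt_min hδ (by positivity)
  obtain ⟨q, hq0, hqlt⟩ := exists_rat_btwn hpos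
  have hq0' : 0 < q := by exact_mod_cast hq0
  have hqδ : (q : ℝ) < δ := hqlt.trans_le (min_le_left _ _)
  have hqm : (q : ℝ) < 1 / ((m : ℝ) + 1) := hqlt.trans_le (min_le_right _ _)
  have hlow := hm q hq0' hqm
  have h3 := hsub ⟨hq0, hqδ⟩
  simp only [mem_preimage, mem_Iio] at h3
  rw [Real.volume_closedBall] at h3
  have hq0r : (0:ℝ) < (q : ℝ) := hq0
  have hb0 : ENNReal.ofReal (2 * (q : ℝ)) ≠ 0 := by
    rw [Ne, ENNReal.ofReal_eq_zero, not_le]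
    linarith
  have h4 := (ENNReal.div_lt_iff (Or.inl hb0) (Or.inl ENNReal.ofReal_ne_top)).1 h3
  rw [← ENNReal.ofReal_mul (by norm_num : (0:ℝ) ≤ 1/4)] at h4
  have h5 := lt_of_le_of_lt hlow h4
  rw [ENNReal.ofReal_lt_ofReal_iff (by linarith : (0:ℝ) < 1/4 * (2 * (q:ℝ)))] at h5
  have : ((1:ℕ) : ℝ) = 1 := by norm_num
  rw [this] at h5
  nlinarith

lemma dd_ae {t : Set ℝ} (ht : MeasurableSet t) : dd t =ᵐ[volume] t := by
  have H := Besicovitch.ae_tendsto_measure_inter_div_of_measurableSet volume ht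
  rw [ae_eq_set]
  constructor
  · refine measure_mono_null ?_ (ae_iff.1 H)
    rintro x ⟨hxd, hxt⟩
    simp only [mem_setOf_eq]
    intro hT
    rw [Set.indicator_of_notMem hxt] at hT
    exact not_mem_dd_of_tendsto_zero hT hxd
  · refine measure_mono_null ?_ (ae_iff.1 H)
    rintro x ⟨hxt, hxd⟩
    simp only [mem_setOf_eq]
    intro hT
    rw [Set.indicator_of_mem hxt, Pi.one_apply] at hT
    exact hxd (mem_dd_of_tendsto hT)

/-! ### The length-`ω₁` enumeration -/

abbrev W : Type := (Cardinal.aleph 1).ord.ToType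

instance : Nonempty W :=
  Ordinal.toType_nonempty_iff_ne_zero.2
    (by
      rw [Ne, Cardinal.ord_eq_zero]
      exact (lt_of_le_of_lt (Cardinal.zero_le _) Cardinal.aleph0_lt_aleph_one).ne')

lemma countable_Iic_W (w : W) : (Set.Iic w).Countable := by
  have h2 : (Set.Iio w).Countable :=
    (Cardinal.countable_iff_lt_aleph_one _).2 (Cardinal.mk_Iio_ord_toType w)
  rw [← Set.Iio_union_right]
  exact h2.union (countable_singleton w)

def NN (f : W → Set ℝ) (w : W) : Set ℝ :=
  ⋃ v ∈ {v : W | v ≤ w ∧ volume (f v) = 0}, f v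

lemma NN_meas (f : W → Set ℝ) (hfB : ∀ w, MeasurableSet (f w)) (w : W) :
    MeasurableSet (NN f w) :=
  MeasurableSet.biUnion ((countable_Iic_W w).mono fun v hv => hv.1) fun v _ => hfB v

lemma NN_null (f : W → Set ℝ) (w : W) : volume (NN f w) = 0 :=
  (measure_biUnion_null_iff ((countable_Iic_W w).mono fun v hv => hv.1)).2 fun _ hv => hv.2

lemma NN_mono (f : W → Set ℝ) {v w : W} (h : v ≤ w) : NN f v ⊆ NN f w :=
  Set.biUnion_subset_biUnion_left fun u hu => ⟨hu.1.trans h, hu.2⟩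

def covSet (f : W → Set ℝ) (Z : Set ℝ) : Set W := {w : W | Z ⊆ NN f w}

open Classical in
def covW (f : W → Set ℝ) (Z : Set ℝ) : W :=
  if h : (covSet f Z).Nonempty then WellFounded.min wellFounded_lt (covSet f Z) h
  else Classical.arbitrary W

lemma covSet_nonempty (f : W → Set ℝ) (hfS : ∀ B : Set ℝ, MeasurableSet B → ∃ w, f w = B)
    {Z : Set ℝ} (hZ : volume Z = 0) : (covSet f Z).Nonempty := by
  obtain ⟨w, hw⟩ := hfS (toMeasurable volume Z) (measurableSet_toMeasurable _ _)
  have h0 : volume (f w) = 0 := by rw [hw, measure_toMeasurable]; exact hZ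
  have hsub : f w ⊆ NN f w :=
    subset_biUnion_of_mem (show w ∈ {v : W | v ≤ w ∧ volume (f v) = 0} from ⟨le_rfl, h0⟩)
  refine ⟨w, ?_⟩
  have hZf : Z ⊆ f w := by rw [hw]; exact subset_toMeasurable volume Z
  exact hZf.trans hsub

lemma cov_spec (f : W → Set ℝ) (hfS : ∀ B : Set ℝ, MeasurableSet B → ∃ w, f w = B)
    {Z : Set ℝ} (hZ : volume Z = 0) : Z ⊆ NN f (covW f Z) := by
  rw [covW, dif_pos (covSet_nonempty f hfS hZ)]
  have hmin : WellFounded.min wellFounded_lt (covSet f Z) (covSet_nonempty f hfS hZ)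
      ∈ covSet f Z := WellFounded.min_mem _ _ _
  exact hmin

lemma cov_mono (f : W → Set ℝ) (hfS : ∀ B : Set ℝ, MeasurableSet B → ∃ w, f w = B)
    {Z Z' : Set ℝ} (hss : Z ⊆ Z') (hZ' : volume Z' = 0) : covW f Z ≤ covW f Z' := by
  have hZ : volume Z = 0 := measure_mono_null hss hZ'
  rw [covW, covW, dif_pos (covSet_nonempty f hfS hZ), dif_pos (covSet_nonempty f hfS hZ')]
  have hmin : WellFounded.min wellFounded_lt (covSet f Z') (covSet_nonempty f hfS hZ')
      ∈ covSet f Z' := WellFounded.min_mem _ _ _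
  have hZN : Z' ⊆ NN f (WellFounded.min wellFounded_lt (covSet f Z')
      (covSet_nonempty f hfS hZ')) := hmin
  have hmem : WellFounded.min wellFounded_lt (covSet f Z') (covSet_nonempty f hfS hZ')
      ∈ covSet f Z := hss.trans hZN
  exact not_lt.1 (WellFounded.not_lt_min _ _ hmem)

def DDf (f : W → Set ℝ) (w : W) : Set ℝ := dd (f w) ∪ NN f w

def TTf (f : W → Set ℝ) (S : Set ℝ) (w : W) : Set ℝ :=
  if volume (S \ DDf f w) = 0 then DDf f w ∪ NN f (covW f (S \ DDf f w)) else univ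

def phiF (f : W → Set ℝ) (S : Set ℝ) : Set ℝ := (⋂ w : W, TTf f S w) ∩ Icc 0 1

lemma subset_TTf (f : W → Set ℝ) (hfS : ∀ B : Set ℝ, MeasurableSet B → ∃ w, f w = B)
    (S : Set ℝ) (w : W) : S ⊆ TTf f S w := by
  rw [TTf]
  split_ifs with h
  · intro x hx
    by_cases hxD : x ∈ DDf f w
    · exact Or.inl hxD
    · exact Or.inr (cov_spec f hfS h ⟨hx, hxD⟩)
  · exact subset_univ S

lemma TTf_mono (f : W → Set ℝ) (hfS : ∀ B : Set ℝ, MeasurableSet B → ∃ w, f w = B)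
    {S S' : Set ℝ} (hss : S ⊆ S') (w : W) : TTf f S w ⊆ TTf f S' w := by
  by_cases h' : volume (S' \ DDf f w) = 0
  · have h : volume (S \ DDf f w) = 0 :=
      measure_mono_null (diff_subset_diff_left hss) h'
    rw [TTf, TTf, if_pos h, if_pos h']
    exact union_subset_union_right _ (NN_mono f (cov_mono f hfS (diff_subset_diff_left hss) h'))
  · have huniv : TTf f S' w = univ := by rw [TTf, if_neg h']
    rw [huniv]
    exact subset_univ _

lemma TTf_meas (f : W → Set ℝ) (hfB : ∀ w, MeasurableSet (f w)) (S : Set ℝ) (w : W) :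
    MeasurableSet (TTf f S w) := by
  rw [TTf]
  split_ifs with h
  · exact ((measurableSet_dd _).union (NN_meas f hfB w)).union (NN_meas f hfB _)
  · exact MeasurableSet.univ

lemma phiF_spec (f : W → Set ℝ) (hfB : ∀ w, MeasurableSet (f w))
    (hfS : ∀ B : Set ℝ, MeasurableSet B → ∃ w, f w = B)
    {A : Set ℝ} (hA1 : A ⊆ Icc (0:ℝ) 1) (hA2 : NullMeasurableSet A volume) :
    MeasurableSet (phiF f A) ∧ phiF f A ⊆ Icc (0:ℝ) 1 ∧ A ⊆ phiF f A ∧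
      volume (phiF f A) = volume A := by
  obtain ⟨t, hts, htm, hteq⟩ := hA2.exists_measurable_subset_ae_eq
  obtain ⟨w₀, hw₀⟩ := hfS (dd t) (measurableSet_dd t)
  have hddfw₀ : dd (f w₀) = dd t := by rw [hw₀]; exact dd_congr (dd_ae htm)
  have htdd : volume (t \ dd t) = 0 := (ae_eq_set.1 (dd_ae htm)).2
  have hAt : volume (A \ t) = 0 := (ae_eq_set.1 hteq).2
  have hAdd : volume (A \ dd t) = 0 := by
    refine measure_mono_null ?_ (measure_union_null hAt htdd)
    rintro x ⟨hxA, hxd⟩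
    by_cases hxt : x ∈ t
    · exact Or.inr ⟨hxt, hxd⟩
    · exact Or.inl ⟨hxA, hxt⟩
  have hval₀ : volume (A \ DDf f w₀) = 0 := by
    apply measure_mono_null ?_ hAdd
    rintro x ⟨hxA, hxD⟩
    exact ⟨hxA, fun hc => hxD (Or.inl (hddfw₀.symm ▸ hc))⟩
  set c₀ := covW f (A \ DDf f w₀) with hc₀
  set β : W := max w₀ c₀ with hβ
  have hsubA : A ⊆ phiF f A :=
    subset_inter (subset_iInter fun w => subset_TTf f hfS A w) hA1
  have hstab : phiF f A = (⋂ w ∈ Set.Iic β, TTf f A w) ∩ Icc 0 1 := by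
    apply subset_antisymm
    · rintro x ⟨hx1, hx2⟩
      exact ⟨mem_iInter₂.2 fun w _ => mem_iInter.1 hx1 w, hx2⟩
    · rintro x ⟨hx1, hx2⟩
      refine ⟨mem_iInter.2 fun w => ?_, hx2⟩
      rcases le_or_gt w β with hwβ | hβw
      · exact mem_iInter₂.1 hx1 w (mem_Iic.2 hwβ)
      · by_cases hval : volume (A \ DDf f w) = 0
        · have hx₀ : x ∈ TTf f A w₀ := mem_iInter₂.1 hx1 w₀ (mem_Iic.2 (le_max_left _ _))
          rw [TTf, if_pos hval₀] at hx₀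
          rw [TTf, if_pos hval]
          simp only [DDf, Set.mem_union] at hx₀ ⊢
          rcases hx₀ with (hx₀ | hx₀) | hx₀
          · -- x ∈ dd (f w₀) = dd t
            left; left
            have h1 : volume (t \ dd (f w)) = 0 := by
              refine measure_mono_null ?_ (measure_union_null hval (NN_null f w))
              rintro z ⟨hzt, hzd⟩
              by_cases hzN : z ∈ NN f w
              · exact Or.inr hzN
              · exact Or.inl ⟨hts hzt, fun hc => by
                  rcases hc with hc | hc
                  · exact hzd hc
                  · exact hzN hc⟩
            have h2 : dd t ⊆ dd (f w) := by
              have h3 := dd_mono_null h1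
              rwa [dd_congr (dd_ae (hfB w))] at h3
            exact h2 (hddfw₀ ▸ hx₀)
          · -- x ∈ NN f w₀
            left; right
            exact NN_mono f hβw.le (NN_mono f (le_max_left _ _) hx₀)
          · -- x ∈ NN f c₀
            left; right
            exact NN_mono f hβw.le (NN_mono f (le_max_right _ _) hx₀)
        · rw [TTf, if_neg hval]
          exact mem_univ x
  refine ⟨?_, inter_subset_right, hsubA, ?_⟩
  · rw [hstab]
    exact (MeasurableSet.biInter (countable_Iic_W β) fun w _ => TTf_meas f hfB A w).inter
      measurableSet_Icc
  · apply le_antisymm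
    · calc volume (phiF f A) ≤ volume (TTf f A w₀) := by
            apply measure_mono
            intro x hx
            exact mem_iInter.1 hx.1 w₀
        _ ≤ volume A := by
            rw [TTf, if_pos hval₀]
            calc volume (DDf f w₀ ∪ NN f c₀)
                ≤ volume (DDf f w₀) + volume (NN f c₀) := measure_union_le _ _
              _ ≤ (volume (dd (f w₀)) + volume (NN f w₀)) + volume (NN f c₀) := by
                  gcongr
                  exact measure_union_le _ _
              _ = volume (dd t) := by
                  rw [NN_null, NN_null, hddfw₀, add_zero, add_zero]
              _ = volume t := measure_congr (dd_ae htm)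
              _ = volume A := measure_congr hteq
    · exact measure_mono hsubA

lemma phiF_mono (f : W → Set ℝ) (hfS : ∀ B : Set ℝ, MeasurableSet B → ∃ w, f w = B)
    {A A' : Set ℝ} (hss : A ⊆ A') : phiF f A ⊆ phiF f A' := by
  rintro x ⟨hx1, hx2⟩
  exact ⟨mem_iInter.2 fun w => TTf_mono f hfS hss w (mem_iInter.1 hx1 w), hx2⟩

open Cardinal in
lemma card_borel : #{t : Set ℝ | MeasurableSet t} ≤ Cardinal.continuum := by
  have hSc : (⋃ (a : ℚ) (b : ℚ) (_ : a < b), ({Ioo (a : ℝ) (b : ℝ)} : Set (Set ℝ))).Countable :=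
    Set.countable_iUnion fun a => Set.countable_iUnion fun b =>
      Set.countable_iUnion fun _ => countable_singleton _
  have hsle : #(⋃ (a : ℚ) (b : ℚ) (_ : a < b), ({Ioo (a : ℝ) (b : ℝ)} : Set (Set ℝ)))
      ≤ Cardinal.continuum := by
    have := hSc.to_subtype
    exact (Cardinal.mk_le_aleph0).trans Cardinal.aleph0_le_continuum
  have h2 := MeasurableSpace.cardinal_measurableSet_le_continuum hsle
  have h3 : {t : Set ℝ | MeasurableSet t} =
      {t : Set ℝ | @MeasurableSet ℝ (MeasurableSpace.generateFrom
        (⋃ (a : ℚ) (b : ℚ) (_ : a < b), ({Ioo (a : ℝ) (b : ℝ)} : Set (Set ℝ)))) t} := by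
    have hgen : MeasurableSpace.generateFrom
        (⋃ (a : ℚ) (b : ℚ) (_ : a < b), ({Ioo (a : ℝ) (b : ℝ)} : Set (Set ℝ)))
        = (inferInstance : MeasurableSpace ℝ) := by
      rw [← Real.borel_eq_generateFrom_Ioo_rat]
      exact (BorelSpace.measurable_eq (α := ℝ)).symm
    rw [hgen]
  rw [h3]
  exact h2

end MBH

/-- Assuming the Continuum Hypothesis `2^ℵ₀ = ℵ₁`, there exists a monotone Borel hull
operation on the Lebesgue measurable subsets of `[0,1]`. -/
theorem monotone_borel_hull_on_measurable_of_CH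
    (hCH : (2 : Cardinal) ^ Cardinal.aleph0 = Cardinal.aleph 1) :
    ∃ φ : Set ℝ → Set ℝ, IsMonotoneHullOn LebSets MeasurableSet φ := by
  classical
  have hCH0 : (2 : Cardinal.{0}) ^ Cardinal.aleph0 = Cardinal.aleph 1 := by
    apply Cardinal.lift_injective
    rw [Cardinal.lift_power, Cardinal.lift_two, Cardinal.lift_aleph0, Cardinal.lift_aleph,
      Ordinal.lift_one]
    exact hCH
  have hcard : Cardinal.mk {t : Set ℝ | MeasurableSet t} ≤ Cardinal.aleph 1 := by
    have h1 := MBH.card_borel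
    rwa [← Cardinal.two_power_aleph0, hCH0] at h1
  obtain ⟨e⟩ : Nonempty ({t : Set ℝ | MeasurableSet t} ↪ MBH.W) := by
    rw [← Cardinal.le_def, Cardinal.mk_ord_toType]
    exact hcard
  set f : MBH.W → Set ℝ := fun w =>
    if h : ∃ t : {t : Set ℝ | MeasurableSet t}, e t = w then
      ((Classical.choose h : {t : Set ℝ | MeasurableSet t}) : Set ℝ) else ∅ with hf
  have hfB : ∀ w, MeasurableSet (f w) := by
    intro w
    rw [hf]
    dsimp only
    split_ifs with h
    · exact (Classical.choose h).2
    · exact MeasurableSet.empty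
  have hfS : ∀ B : Set ℝ, MeasurableSet B → ∃ w, f w = B := by
    intro B hB
    refine ⟨e ⟨B, hB⟩, ?_⟩
    rw [hf]
    dsimp only
    have hex : ∃ t : {t : Set ℝ | MeasurableSet t}, e t = e ⟨B, hB⟩ := ⟨⟨B, hB⟩, rfl⟩
    rw [dif_pos hex]
    have h := e.injective (Classical.choose_spec hex)
    rw [h]
  refine ⟨MBH.phiF f, ?_, ?_⟩
  · intro A hA
    exact MBH.phiF_spec f hfB hfS hA.1 hA.2
  · intro A hA A' hA' hss
    exact MBH.phiF_mono f hfS hss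
end
end

section
/- Assume the Continuum Hypothesis (2^{ℵ₀} = ℵ₁). Then there exists a monotone map ψ : L → P([0,1]) such that ψ(M) is a G_δ subset of [0,1] for every M ∈ L, λ(M Δ ψ(M)) = 0 for every M ∈ L, M ⊆ M' implies ψ(M) ⊆ ψ(M'), and whenever M, M' ∈ L satisfy λ(M Δ M') = 0, one has ψ(M) = ψ(M'). -/
open MeasureTheory Set
open scoped ENNReal NNReal

noncomputable section

namespace MGL

theorem exists_gdelta_hull (s : Set ℝ) (hs : volume s ≠ ⊤) :
    ∃ T, IsGδ T ∧ s ⊆ T ∧ volume T = volume s := by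
  have h : ∀ n : ℕ, ∃ U, s ⊆ U ∧ IsOpen U ∧ volume U < volume s + ((n : ℝ≥0∞)+1)⁻¹ :=
    fun n => Set.exists_isOpen_lt_add s (μ := volume) hs
      (ε := ((n : ℝ≥0∞)+1)⁻¹) (ENNReal.inv_ne_zero.2 (by simp))
  choose U hsub hopen hlt using h
  refine ⟨⋂ n, U n, .iInter_of_isOpen hopen, subset_iInter hsub,
    le_antisymm ?_ (measure_mono (subset_iInter hsub))⟩
  refine ENNReal.le_of_forall_pos_le_add fun ε hε _ => ?_
  obtain ⟨n, hn⟩ := exists_nat_gt (ε⁻¹ : ℝ≥0)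
  have h1 : ((n : ℝ≥0∞)+1)⁻¹ ≤ (ε : ℝ≥0∞) := by
    rw [ENNReal.inv_le_iff_inv_le, ← ENNReal.coe_inv hε.ne']
    calc ((ε⁻¹ : ℝ≥0) : ℝ≥0∞) ≤ ((n : ℝ≥0) : ℝ≥0∞) := by exact_mod_cast hn.le
      _ ≤ (n : ℝ≥0∞) + 1 := by simp
  calc volume (⋂ n, U n) ≤ volume (U n) := measure_mono (iInter_subset _ _)
    _ ≤ volume s + ((n : ℝ≥0∞)+1)⁻¹ := (hlt n).le
    _ ≤ volume s + ε := add_le_add_right h1 _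

theorem exists_gdelta_null (s : Set ℝ) (hs : volume s = 0) :
    ∃ T, IsGδ T ∧ s ⊆ T ∧ volume T = 0 := by
  obtain ⟨T, h1, h2, h3⟩ := exists_gdelta_hull s (by simp [hs])
  exact ⟨T, h1, h2, h3.trans hs⟩

theorem exists_gdelta_hull_null_diff (s : Set ℝ) (hsm : NullMeasurableSet s volume)
    (hs : volume s ≠ ⊤) : ∃ T, IsGδ T ∧ s ⊆ T ∧ volume (T \ s) = 0 := by
  obtain ⟨T, h1, h2, h3⟩ := exists_gdelta_hull s hs
  refine ⟨T, h1, h2, ?_⟩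
  rw [measure_diff h2 hsm hs, h3, tsub_self]

theorem diff_chain (a b c : Set ℝ) : a \ c ⊆ (a \ b) ∪ (b \ c) := by
  intro x hx
  by_cases hb : x ∈ b
  · exact Or.inr ⟨hb, hx.2⟩
  · exact Or.inl ⟨hx.1, hb⟩

/-- The key sandwich lemma: there is a Gδ set `T` a.e. equal to `M`, inside a given
Gδ envelope `H`, and containing countably many given Gδ sets each a.e. inside `M`. -/
theorem sandwich {M H : Set ℝ} (hM : NullMeasurableSet M volume) (hMfin : volume M ≠ ⊤)
    (hH : IsGδ H) (hMH : volume (M \ H) = 0)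
    {ι : Type} [Countable ι] (G : ι → Set ℝ)
    (hGH : ∀ i, G i ⊆ H) (hGM : ∀ i, volume (G i \ M) = 0) :
    ∃ T, IsGδ T ∧ T ⊆ H ∧ volume (M \ T) = 0 ∧ volume (T \ M) = 0 ∧ ∀ i, G i ⊆ T := by
  have hHm : NullMeasurableSet H volume := hH.measurableSet.nullMeasurableSet
  obtain ⟨T₀, hT₀gδ, hT₀sub, hT₀null⟩ := exists_gdelta_hull_null_diff (M ∩ H)
    (hM.inter hHm) (fun h => hMfin (top_le_iff.1 (h ▸ measure_mono inter_subset_left)))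
  set G₀ := T₀ ∩ H with hG₀
  have hMG₀ : volume (M \ G₀) = 0 := by
    refine measure_mono_null ?_ hMH
    rintro x ⟨hx1, hx2⟩
    exact ⟨hx1, fun hxH => hx2 ⟨hT₀sub ⟨hx1, hxH⟩, hxH⟩⟩
  have hN₀ : volume (⋃ i, (G i \ G₀)) = 0 := by
    refine measure_iUnion_null fun i => measure_mono_null ?_
      (measure_union_null (hGM i) hMG₀)
    exact diff_chain _ M _
  obtain ⟨N, hNgδ, hNsub, hNnull⟩ := exists_gdelta_null _ hN₀
  refine ⟨G₀ ∪ (N ∩ H), (hT₀gδ.inter hH).union (hNgδ.inter hH),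
    union_subset inter_subset_right inter_subset_right, ?_, ?_, ?_⟩
  · refine measure_mono_null ?_ hMG₀
    rintro x ⟨hx1, hx2⟩
    exact ⟨hx1, fun h => hx2 (Or.inl h)⟩
  · refine measure_mono_null ?_ (measure_union_null hT₀null hNnull)
    rintro x ⟨hx1 | hx1, hx2⟩
    · exact Or.inl ⟨hx1.1, fun h => hx2 h.1⟩
    · exact Or.inr hx1.1
  · intro i x hx
    by_cases hg : x ∈ G₀
    · exact Or.inl hg
    · exact Or.inr ⟨hNsub (mem_iUnion.2 ⟨i, hx, hg⟩), hGH i hx⟩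

/-! ### The measure algebra of `[0,1]` -/

def S : Type := {A : Set ℝ // A ∈ LebSets}

def aeq (A B : Set ℝ) : Prop := volume (A \ B) = 0 ∧ volume (B \ A) = 0

theorem aeq_refl (A : Set ℝ) : aeq A A := by simp [aeq]

theorem aeq_symm {A B : Set ℝ} (h : aeq A B) : aeq B A := ⟨h.2, h.1⟩

theorem aeq_null_left {A B C : Set ℝ} (h1 : volume (A \ B) = 0) (h2 : volume (B \ C) = 0) :
    volume (A \ C) = 0 :=
  measure_mono_null (diff_chain A B C) (measure_union_null h1 h2)

theorem aeq_trans {A B C : Set ℝ} (h1 : aeq A B) (h2 : aeq B C) : aeq A C :=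
  ⟨aeq_null_left h1.1 h2.1, aeq_null_left h2.2 h1.2⟩

instance setoidS : Setoid S := ⟨fun A B => aeq A.1 B.1,
  fun A => aeq_refl A.1, aeq_symm, aeq_trans⟩

def QL : Type := Quotient setoidS

def rep (q : QL) : Set ℝ := (Quotient.out q).1

theorem rep_mem (q : QL) : rep q ∈ LebSets := (Quotient.out q).2

theorem rep_mk {M : Set ℝ} (h : M ∈ LebSets) :
    aeq (rep (Quotient.mk setoidS ⟨M, h⟩)) M :=
  Quotient.mk_out (s := setoidS) (⟨M, h⟩ : S)

theorem rep_fin (q : QL) : volume (rep q) ≠ ⊤ := by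
  have h1 : volume (rep q) ≤ volume (Icc (0:ℝ) 1) := measure_mono (rep_mem q).1
  have h2 : volume (Icc (0:ℝ) 1) < ⊤ := by rw [Real.volume_Icc]; exact ENNReal.ofReal_lt_top
  exact (h1.trans_lt h2).ne

theorem card_QL_le_continuum : Cardinal.mk QL ≤ Cardinal.continuum := by
  have hinj : Function.Injective
      (fun q : QL => (⟨toMeasurable volume (rep q), measurableSet_toMeasurable _ _⟩ :
        {t : Set ℝ // MeasurableSet t})) := by
    intro q q' h
    simp only [Subtype.mk.injEq] at h
    have h1 : ∀ p : QL, aeq (toMeasurable volume (rep p)) (rep p) := by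
      intro p
      have := NullMeasurableSet.toMeasurable_ae_eq (s := rep p) (μ := volume) (rep_mem p).2
      exact ae_eq_set.1 this
    have h2 : aeq (rep q) (rep q') := aeq_trans (aeq_symm (h1 q)) (h ▸ h1 q')
    exact (Quotient.out_eq q).symm.trans ((Quotient.sound h2).trans (Quotient.out_eq q'))
  refine (Cardinal.mk_le_of_injective hinj).trans ?_
  have hb : Real.measurableSpace =
      MeasurableSpace.generateFrom (range (Iio : ℝ → Set ℝ)) := by
    rw [BorelSpace.measurable_eq (α := ℝ), borel_eq_generateFrom_Iio]
  have hset : {t : Set ℝ | MeasurableSet t} =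
      {t : Set ℝ | @MeasurableSet ℝ (.generateFrom (range (Iio : ℝ → Set ℝ))) t} := by
    ext t
    rw [mem_setOf_eq, mem_setOf_eq, hb]
  have : Cardinal.mk {t : Set ℝ | MeasurableSet t} ≤ Cardinal.continuum := by
    rw [hset]
    refine MeasurableSpace.cardinal_measurableSet_le_continuum ?_
    exact (Cardinal.mk_range_le).trans (by rw [Cardinal.mk_real])
  exact this

/-! ### A well order of `QL` of type at most `ω₁` -/

def W : Type := (Cardinal.aleph 1).ord.ToType

noncomputable instance : LinearOrder W := linearOrder_toType _
instance : WellFoundedLT W := wellFoundedLT_toType _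
instance : IsWellOrder W (· < ·) := isWellOrder_lt

theorem countable_Iio_W (w : W) : Countable {y : W // y < w} := by
  have h2 := Cardinal.lt_ord.1 (Ordinal.typein_lt_self (o := (Cardinal.aleph 1).ord) w)
  have hc := Ordinal.card_typein (r := ((· < ·) : W → W → Prop)) w
  have h3 : Cardinal.mk {y : W // y < w} < Cardinal.aleph 1 := by
    rw [← hc]; exact h2
  exact Cardinal.mk_le_aleph0_iff.1 (Order.lt_succ_iff.1 (Cardinal.succ_aleph0 ▸ h3))

theorem chDown (hCH : (2 : Cardinal.{u}) ^ Cardinal.aleph0 = Cardinal.aleph 1) :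
    (2 : Cardinal.{0}) ^ Cardinal.aleph0 = Cardinal.aleph 1 := by
  refine Cardinal.lift_inj.{0,u}.1 ?_
  rw [Cardinal.lift_power, Cardinal.lift_aleph0, Cardinal.lift_two, hCH]
  rw [← Cardinal.succ_aleph0, ← Cardinal.succ_aleph0, Cardinal.lift_succ, Cardinal.lift_aleph0]

theorem exists_embedding (hCH : (2 : Cardinal.{0}) ^ Cardinal.aleph0 = Cardinal.aleph 1) :
    Nonempty (QL ↪ W) := by
  have hc : Cardinal.continuum = Cardinal.aleph 1 :=
    Cardinal.two_power_aleph0.symm.trans hCH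
  have h1 : Cardinal.mk QL ≤ Cardinal.aleph 1 := le_of_le_of_eq card_QL_le_continuum hc
  have h2 : Cardinal.mk W = Cardinal.aleph 1 := by
    rw [show Cardinal.mk W = Cardinal.mk (Cardinal.aleph 1).ord.ToType from rfl,
      Cardinal.mk_toType, Cardinal.card_ord]
  rw [← h2] at h1
  exact Cardinal.le_def _ _ |>.1 h1

theorem exists_f (e : QL ↪ W) :
    ∃ f : QL → Set ℝ,
      (∀ q, IsGδ (f q) ∧ f q ⊆ Icc (0:ℝ) 1 ∧
        volume (rep q \ f q) = 0 ∧ volume (f q \ rep q) = 0) ∧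
      (∀ q q', volume (rep q \ rep q') = 0 → f q ⊆ f q') := by
  classical
  set r : QL → QL → Prop := fun p q => e p < e q with hr
  have wf : WellFounded r := InvImage.wf e wellFounded_lt
  set Spec : ∀ q : QL, (∀ p, r p q → Set ℝ) → Set ℝ → Prop := fun q prev T =>
    IsGδ T ∧ T ⊆ Icc (0:ℝ) 1 ∧ volume (rep q \ T) = 0 ∧ volume (T \ rep q) = 0 ∧
      (∀ p, ∀ hp : r p q, volume (rep p \ rep q) = 0 → prev p hp ⊆ T) ∧
      (∀ p, ∀ hp : r p q, volume (rep q \ rep p) = 0 → T ⊆ prev p hp) with hSpec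
  set body : ∀ q : QL, (∀ p, r p q → Set ℝ) → Set ℝ := fun q prev =>
    if h : ∃ T, Spec q prev T then h.choose else ∅ with hbody
  set f : QL → Set ℝ := wf.fix body with hf
  have hfeq : ∀ q, f q = body q fun p _ => f p := fun q => wf.fix_eq body q
  have main : ∀ q, (IsGδ (f q) ∧ f q ⊆ Icc (0:ℝ) 1 ∧
      volume (rep q \ f q) = 0 ∧ volume (f q \ rep q) = 0) ∧
      (∀ p, r p q → (volume (rep p \ rep q) = 0 → f p ⊆ f q) ∧
        (volume (rep q \ rep p) = 0 → f q ⊆ f p)) := by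
    intro q
    induction q using wf.induction with
    | _ q IH =>
    haveI hcnt : Countable {p : QL // r p q} := by
      have hC := countable_Iio_W (e q)
      have hinj : Function.Injective
          (fun p : {p : QL // r p q} => (⟨e p.1, p.2⟩ : {y : W // y < e q})) := by
        intro a b hab
        simp only [Subtype.mk.injEq] at hab
        exact Subtype.ext (e.injective hab)
      exact hinj.countable
    have hcons : ∀ p p' : QL, r p q → r p' q →
        volume (rep p \ rep p') = 0 → f p ⊆ f p' := by
      intro p p' hp hp' hle
      rcases lt_trichotomy (e p) (e p') with h | h | h
      · exact ((IH p' hp').2 p h).1 hle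
      · rw [e.injective h]
      · exact ((IH p hp).2 p' h).2 hle
    have hex : ∃ T, Spec q (fun p _ => f p) T := by
      set Up := {p : QL // r p q ∧ volume (rep q \ rep p) = 0} with hUp
      set Lo := {p : QL // r p q ∧ volume (rep p \ rep q) = 0} with hLo
      haveI : Countable Up := by
        have hinj : Function.Injective
            (fun p : Up => (⟨p.1, p.2.1⟩ : {p : QL // r p q})) := by
          intro a b hab
          simp only [Subtype.mk.injEq] at hab
          exact Subtype.ext hab
        exact hinj.countable
      haveI : Countable Lo := by
        have hinj : Function.Injective
            (fun p : Lo => (⟨p.1, p.2.1⟩ : {p : QL // r p q})) := by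
          intro a b hab
          simp only [Subtype.mk.injEq] at hab
          exact Subtype.ext hab
        exact hinj.countable
      set H : Set ℝ := Icc (0:ℝ) 1 ∩ ⋂ p : Up, f p.1 with hH
      have hHgδ : IsGδ H :=
        (isClosed_Icc.isGδ).inter (IsGδ.iInter fun p => (IH p.1 p.2.1).1.1)
      have hMH : volume (rep q \ H) = 0 := by
        have hsub : rep q \ H ⊆ ⋃ p : Up, (rep q \ f p.1) := by
          rintro x ⟨hx1, hx2⟩
          by_cases hI : x ∈ Icc (0:ℝ) 1
          · have : ¬ x ∈ ⋂ p : Up, f p.1 := fun h => hx2 ⟨hI, h⟩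
            obtain ⟨p, hp⟩ := not_forall.1 (fun h => this (mem_iInter.2 h))
            exact mem_iUnion.2 ⟨p, hx1, hp⟩
          · exact absurd ((rep_mem q).1 hx1) hI
        refine measure_mono_null hsub (measure_iUnion_null fun p => ?_)
        exact aeq_null_left p.2.2 (IH p.1 p.2.1).1.2.2.1
      obtain ⟨T, h1, h2, h3, h4, h5⟩ := sandwich (rep_mem q).2 (rep_fin q) hHgδ hMH
        (G := fun p : Lo => f p.1)
        (fun p => subset_inter (IH p.1 p.2.1).1.2.1
          (subset_iInter fun p' => hcons p.1 p'.1 p.2.1 p'.2.1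
            (aeq_null_left p.2.2 p'.2.2)))
        (fun p => aeq_null_left (IH p.1 p.2.1).1.2.2.2 p.2.2)
      refine ⟨T, h1, h2.trans inter_subset_left, h3, h4, ?_, ?_⟩
      · intro p hp hle
        exact h5 ⟨p, hp, hle⟩
      · intro p hp hge x hx
        have hxH : x ∈ H := h2 hx
        exact mem_iInter.1 hxH.2 ⟨p, hp, hge⟩
    have hspec : Spec q (fun p _ => f p) (f q) := by
      have hb : body q (fun p _ => f p) = hex.choose := dif_pos hex
      rw [hfeq q, hb]
      exact hex.choose_spec
    refine ⟨⟨hspec.1, hspec.2.1, hspec.2.2.1, hspec.2.2.2.1⟩, fun p hp => ?_⟩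
    exact ⟨fun hle => hspec.2.2.2.2.1 p hp hle, fun hge => hspec.2.2.2.2.2 p hp hge⟩
  refine ⟨f, fun q => (main q).1, fun q q' hle => ?_⟩
  rcases lt_trichotomy (e q) (e q') with h | h | h
  · exact ((main q').2 q h).1 hle
  · rw [e.injective h]
  · exact ((main q).2 q' h).2 hle

end MGL

/-- Assuming the Continuum Hypothesis `2^ℵ₀ = ℵ₁`, there exists a monotone map
`ψ : L → 𝒫([0,1])` such that `ψ(M)` is a Gδ set, `λ(M Δ ψ(M)) = 0` for every `M ∈ L`,
`M ⊆ M'` implies `ψ(M) ⊆ ψ(M')`, and `λ(M Δ M') = 0` implies `ψ(M) = ψ(M')`. -/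
theorem monotone_Gdelta_aelifting_of_CH
    (hCH : (2 : Cardinal) ^ Cardinal.aleph0 = Cardinal.aleph 1) :
    ∃ ψ : Set ℝ → Set ℝ,
      (∀ M ∈ LebSets, IsGδ (ψ M) ∧ ψ M ⊆ Icc (0:ℝ) 1 ∧ volume (symmDiff M (ψ M)) = 0) ∧
      (∀ M ∈ LebSets, ∀ M' ∈ LebSets, M ⊆ M' → ψ M ⊆ ψ M') ∧
      (∀ M ∈ LebSets, ∀ M' ∈ LebSets, volume (symmDiff M M') = 0 → ψ M = ψ M') := by
  classical
  obtain ⟨e⟩ := MGL.exists_embedding (MGL.chDown hCH)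
  obtain ⟨f, hf1, hf2⟩ := MGL.exists_f e
  refine ⟨fun M => if h : M ∈ LebSets then f (Quotient.mk MGL.setoidS ⟨M, h⟩) else ∅,
    ?_, ?_, ?_⟩
  · intro M h
    simp only [dif_pos h]
    set q := Quotient.mk MGL.setoidS (⟨M, h⟩ : MGL.S) with hq
    have hrep : MGL.aeq (MGL.rep q) M := MGL.rep_mk h
    refine ⟨(hf1 q).1, (hf1 q).2.1, ?_⟩
    have h1 : volume (M \ f q) = 0 := MGL.aeq_null_left hrep.2 (hf1 q).2.2.1
    have h2 : volume (f q \ M) = 0 := MGL.aeq_null_left (hf1 q).2.2.2 hrep.1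
    rw [Set.symmDiff_def]
    exact measure_union_null h1 h2
  · intro M h M' h' hMM'
    simp only [dif_pos h, dif_pos h']
    set q := Quotient.mk MGL.setoidS (⟨M, h⟩ : MGL.S) with hq
    set q' := Quotient.mk MGL.setoidS (⟨M', h'⟩ : MGL.S) with hq'
    have hrep : MGL.aeq (MGL.rep q) M := MGL.rep_mk h
    have hrep' : MGL.aeq (MGL.rep q') M' := MGL.rep_mk h'
    refine hf2 q q' ?_
    have hMM'0 : volume (M \ M') = 0 := by
      rw [Set.diff_eq_empty.2 hMM']
      exact measure_empty
    exact MGL.aeq_null_left hrep.1 (MGL.aeq_null_left hMM'0 hrep'.2)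
  · intro M h M' h' hsym
    simp only [dif_pos h, dif_pos h']
    rw [Set.symmDiff_def] at hsym
    have hpair := measure_union_null_iff.1 hsym
    have : Quotient.mk MGL.setoidS (⟨M, h⟩ : MGL.S)
        = Quotient.mk MGL.setoidS (⟨M', h'⟩ : MGL.S) :=
      Quotient.sound ⟨hpair.1, hpair.2⟩
    rw [this]
end
end

section
/- Assume the Continuum Hypothesis (2^{ℵ₀} = ℵ₁). Then there exists a monotone Borel hull operation φ on N (so φ(A) is a Borel hull of A for every Lebesgue null A ⊆ [0,1], and A ⊆ A' implies φ(A) ⊆ φ(A')) which in addition satisfies: (1) φ(A ∪ A') ⊆ φ(A) ∪ φ(A') for all A, A' ∈ N (subadditivity), and (2) for every Borel set B ⊆ [0,1], the set (⋃{φ(A) : A ⊆ B, A ∈ N}) \ B is Lebesgue null. -/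
open MeasureTheory Set

noncomputable section

namespace SVH

variable {W : Type} [LinearOrder W] [WellFoundedLT W] [Nonempty W]

/-- Union of all the null sets enumerated before `γ`. -/
def Cset (D : W → Set ℝ) (γ : W) : Set ℝ :=
  ⋃ β ∈ {β : W | β < γ ∧ volume (D β) = 0}, D β

open Classical in
/-- Least element of `L` above `β`. -/
def nextL (L : Set W) (β : W) : W :=
  if h : {lam : W | lam ∈ L ∧ β < lam}.Nonempty then wellFounded_lt.min _ h
  else Classical.arbitrary W

/-- Elements of `L` admitting a null Borel hull of `A` enumerated before them. -/
def Sat (D : W → Set ℝ) (L : Set W) (A : Set ℝ) : Set W :=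
  {lam | lam ∈ L ∧ ∃ β, β < lam ∧ A ⊆ D β ∧ volume (D β) = 0}

open Classical in
/-- The index associated to `A`.  -/
def alphaIdx (D : W → Set ℝ) (L : Set W) (A : Set ℝ) : W :=
  if h : (Sat D L A).Nonempty then wellFounded_lt.min _ h else Classical.arbitrary W

/-- The hull operation. -/
def phi (D : W → Set ℝ) (L : Set W) (A : Set ℝ) : Set ℝ :=
  ⋂ β ∈ {β : W | β < alphaIdx D L A ∧ A ⊆ D β}, (D β ∪ Cset D (nextL L β))

section Lemmas

variable (D : W → Set ℝ) (L : Set W)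

theorem Cset_mono {γ γ' : W} (h : γ ≤ γ') : Cset D γ ⊆ Cset D γ' := by
  apply Set.biUnion_subset_biUnion_left
  exact fun β hβ => ⟨lt_of_lt_of_le hβ.1 h, hβ.2⟩

theorem subset_Cset {β γ : W} (h : β < γ) (h0 : volume (D β) = 0) :
    D β ⊆ Cset D γ :=
  Set.subset_biUnion_of_mem (show β ∈ {β : W | β < γ ∧ volume (D β) = 0} from ⟨h, h0⟩)

theorem Cset_null (hcount : ∀ γ : W, Set.Countable {β : W | β < γ}) (γ : W) :
    volume (Cset D γ) = 0 := by
  rw [Cset, measure_biUnion_null_iff ((hcount γ).mono (fun β hβ => hβ.1))]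
  exact fun β hβ => hβ.2

theorem Cset_meas (hcount : ∀ γ : W, Set.Countable {β : W | β < γ})
    (hDmeas : ∀ β, MeasurableSet (D β)) (γ : W) : MeasurableSet (Cset D γ) :=
  MeasurableSet.biUnion ((hcount γ).mono (fun β hβ => hβ.1)) (fun β _ => hDmeas β)

theorem Cset_subset_Icc (hDsub : ∀ β, D β ⊆ Icc (0:ℝ) 1) (γ : W) :
    Cset D γ ⊆ Icc (0:ℝ) 1 :=
  Set.iUnion₂_subset fun β _ => hDsub β

variable (hLub : ∀ β : W, ∃ lam ∈ L, β < lam)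

include hLub

theorem nextL_memL (β : W) : nextL L β ∈ L ∧ β < nextL L β := by
  have h : {lam : W | lam ∈ L ∧ β < lam}.Nonempty := by
    obtain ⟨lam, h1, h2⟩ := hLub β
    exact ⟨lam, h1, h2⟩
  rw [nextL, dif_pos h]
  exact wellFounded_lt.min_mem _ h

theorem nextL_min {β lam : W} (h1 : lam ∈ L) (h2 : β < lam) : nextL L β ≤ lam := by
  have h : {lam : W | lam ∈ L ∧ β < lam}.Nonempty := ⟨lam, h1, h2⟩
  rw [nextL, dif_pos h]
  exact not_lt.1 (wellFounded_lt.not_lt_min {lam : W | lam ∈ L ∧ β < lam} (x := lam) ⟨h1, h2⟩)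

end Lemmas

section Main

variable (D : W → Set ℝ) (L : Set W)
  (hcount : ∀ γ : W, Set.Countable {β : W | β < γ})
  (hDmeas : ∀ β, MeasurableSet (D β))
  (hDsub : ∀ β, D β ⊆ Icc (0:ℝ) 1)
  (hsurj : ∀ S : Set ℝ, MeasurableSet S → S ⊆ Icc (0:ℝ) 1 → ∃ β, D β = S)
  (hLub : ∀ β : W, ∃ lam ∈ L, β < lam)
  (hclose : ∀ lam ∈ L, ∀ β₁ < lam, ∀ β₂ < lam, ∃ β₃ < lam, D β₃ = D β₁ ∪ D β₂)

include hsurj hLub in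
theorem Sat_nonempty {A : Set ℝ} (hA : A ∈ NullSets) : (Sat D L A).Nonempty := by
  obtain ⟨β, hβ⟩ := hsurj (toMeasurable volume A ∩ Icc (0:ℝ) 1)
    ((measurableSet_toMeasurable volume A).inter measurableSet_Icc)
    inter_subset_right
  obtain ⟨lam, h1, h2⟩ := hLub β
  refine ⟨lam, h1, β, h2, ?_, ?_⟩
  · rw [hβ]
    exact subset_inter (subset_toMeasurable volume A) hA.1
  · rw [hβ]
    refine le_antisymm (le_trans (measure_mono inter_subset_left) ?_) (zero_le)
    rw [measure_toMeasurable]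
    exact le_of_eq hA.2

theorem alpha_mem {A : Set ℝ} (hA : (Sat D L A).Nonempty) :
    alphaIdx D L A ∈ Sat D L A := by
  rw [alphaIdx, dif_pos hA]
  exact wellFounded_lt.min_mem _ hA

theorem alpha_min {A : Set ℝ} {lam : W} (h : lam ∈ Sat D L A) :
    alphaIdx D L A ≤ lam := by
  rw [alphaIdx, dif_pos ⟨lam, h⟩]
  exact not_lt.1 (wellFounded_lt.not_lt_min _ h)

include hsurj hLub in
theorem alpha_mono {A A' : Set ℝ} (hA : A ∈ NullSets) (hA' : A' ∈ NullSets)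
    (hss : A ⊆ A') : alphaIdx D L A ≤ alphaIdx D L A' := by
  have h' := alpha_mem D L (Sat_nonempty D L hsurj hLub hA')
  exact alpha_min D L ⟨h'.1, h'.2.choose, h'.2.choose_spec.1,
    hss.trans h'.2.choose_spec.2.1, h'.2.choose_spec.2.2⟩

theorem subset_phi {A : Set ℝ} : A ⊆ phi D L A := by
  intro x hx
  exact Set.mem_iInter₂.2 fun β hβ => Or.inl (hβ.2 hx)

theorem phi_subset_term {A : Set ℝ} {β : W} (h1 : β < alphaIdx D L A) (h2 : A ⊆ D β) :
    phi D L A ⊆ D β ∪ Cset D (nextL L β) := by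
  intro x hx
  exact Set.mem_iInter₂.1 hx β ⟨h1, h2⟩

include hsurj hLub in
/-- The key smallness property: `phi A` is contained in `Cset (nextL γ)`
for any `γ ≥ alphaIdx A`. -/
theorem phi_subset_Cset {A : Set ℝ} (hA : A ∈ NullSets) {γ : W}
    (hγ : alphaIdx D L A ≤ γ) : phi D L A ⊆ Cset D (nextL L γ) := by
  obtain ⟨hLmem, β₀, hβ₀lt, hβ₀ss, hβ₀null⟩ := alpha_mem D L (Sat_nonempty D L hsurj hLub hA)
  have hterm := phi_subset_term D L hβ₀lt hβ₀ss
  have hγlt : γ < nextL L γ := (nextL_memL L hLub γ).2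
  intro x hx
  rcases hterm hx with hx1 | hx2
  · exact subset_Cset D (lt_of_lt_of_le hβ₀lt (le_of_lt (lt_of_le_of_lt hγ hγlt))) hβ₀null hx1
  · refine Cset_mono D ?_ hx2
    exact le_trans (nextL_min L hLub hLmem hβ₀lt) (le_trans hγ (le_of_lt hγlt))

include hcount hDmeas hDsub hsurj hLub in
theorem phi_hull {A : Set ℝ} (hA : A ∈ NullSets) :
    MeasurableSet (phi D L A) ∧ phi D L A ⊆ Icc (0:ℝ) 1 ∧ A ⊆ phi D L A ∧
      volume (phi D L A) = volume A := by
  have hsat := Sat_nonempty D L hsurj hLub hA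
  obtain ⟨hLmem, β₀, hβ₀lt, hβ₀ss, hβ₀null⟩ := alpha_mem D L hsat
  have hterm := phi_subset_term D L hβ₀lt hβ₀ss
  refine ⟨?_, ?_, subset_phi D L, ?_⟩
  · refine MeasurableSet.biInter ((hcount (alphaIdx D L A)).mono fun β hβ => hβ.1) ?_
    exact fun β _ => (hDmeas β).union (Cset_meas D hcount hDmeas _)
  · exact hterm.trans (union_subset (hDsub β₀) (Cset_subset_Icc D hDsub _))
  · rw [hA.2]
    refine le_antisymm (le_trans (measure_mono hterm) ?_) (zero_le)
    exact le_of_eq (measure_union_null hβ₀null (Cset_null D hcount _))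

include hsurj hLub in
theorem phi_mono {A A' : Set ℝ} (hA : A ∈ NullSets) (hA' : A' ∈ NullSets)
    (hss : A ⊆ A') : phi D L A ⊆ phi D L A' := by
  have halpha := alpha_mono D L hsurj hLub hA hA' hss
  intro x hx
  refine Set.mem_iInter₂.2 fun β hβ => ?_
  rcases lt_or_ge β (alphaIdx D L A) with hlt | hge
  · exact phi_subset_term D L hlt (hss.trans hβ.2) hx
  · exact Or.inr (phi_subset_Cset D L hsurj hLub hA hge hx)

include hsurj hLub hclose in
theorem phi_subadd {A A' : Set ℝ} (hA : A ∈ NullSets) (hA' : A' ∈ NullSets) :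
    phi D L (A ∪ A') ⊆ phi D L A ∪ phi D L A' := by
  have hU : A ∪ A' ∈ NullSets :=
    ⟨union_subset hA.1 hA'.1, measure_union_null hA.2 hA'.2⟩
  intro x hx
  by_contra hcon
  have hx1 : x ∉ phi D L A := fun h => hcon (Or.inl h)
  have hx2 : x ∉ phi D L A' := fun h => hcon (Or.inr h)
  -- extract failing terms
  have h1 : ∃ β₁, (β₁ < alphaIdx D L A ∧ A ⊆ D β₁) ∧ x ∉ D β₁ ∪ Cset D (nextL L β₁) := by
    by_contra h
    push_neg at h
    exact hx1 (Set.mem_iInter₂.2 fun β hβ => h β hβ)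
  have h2 : ∃ β₂, (β₂ < alphaIdx D L A' ∧ A' ⊆ D β₂) ∧ x ∉ D β₂ ∪ Cset D (nextL L β₂) := by
    by_contra h
    push_neg at h
    exact hx2 (Set.mem_iInter₂.2 fun β hβ => h β hβ)
  obtain ⟨β₁, ⟨hβ₁lt, hβ₁ss⟩, hxβ₁⟩ := h1
  obtain ⟨β₂, ⟨hβ₂lt, hβ₂ss⟩, hxβ₂⟩ := h2
  have hα : alphaIdx D L A ∈ L := (alpha_mem D L (Sat_nonempty D L hsurj hLub hA)).1
  have hα' : alphaIdx D L A' ∈ L := (alpha_mem D L (Sat_nonempty D L hsurj hLub hA')).1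
  set lam := max (nextL L β₁) (nextL L β₂) with hlam
  have hlamL : lam ∈ L := by
    rcases max_cases (nextL L β₁) (nextL L β₂) with ⟨h, _⟩ | ⟨h, _⟩ <;> rw [hlam, h]
    · exact (nextL_memL L hLub β₁).1
    · exact (nextL_memL L hLub β₂).1
  have hβ₁lam : β₁ < lam := lt_of_lt_of_le (nextL_memL L hLub β₁).2 (le_max_left _ _)
  have hβ₂lam : β₂ < lam := lt_of_lt_of_le (nextL_memL L hLub β₂).2 (le_max_right _ _)
  obtain ⟨β₃, hβ₃lam, hβ₃eq⟩ := hclose lam hlamL β₁ hβ₁lam β₂ hβ₂lam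
  -- lam ≤ alphaIdx (A ∪ A')
  have hmono1 := alpha_mono D L hsurj hLub hA hU subset_union_left
  have hmono2 := alpha_mono D L hsurj hLub hA' hU subset_union_right
  have hlamle : lam ≤ alphaIdx D L (A ∪ A') := by
    refine max_le ?_ ?_
    · exact le_trans (nextL_min L hLub hα hβ₁lt) hmono1
    · exact le_trans (nextL_min L hLub hα' hβ₂lt) hmono2
  have hβ₃lt : β₃ < alphaIdx D L (A ∪ A') := lt_of_lt_of_le hβ₃lam hlamle
  have hUβ₃ : A ∪ A' ⊆ D β₃ := by
    rw [hβ₃eq]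
    exact union_subset_union hβ₁ss hβ₂ss
  have hxterm := phi_subset_term D L hβ₃lt hUβ₃ hx
  rcases hxterm with hxD | hxC
  · rw [hβ₃eq] at hxD
    rcases hxD with h | h
    · exact hxβ₁ (Or.inl h)
    · exact hxβ₂ (Or.inl h)
  · have hnle : nextL L β₃ ≤ lam := nextL_min L hLub hlamL hβ₃lam
    have : x ∈ Cset D lam := Cset_mono D hnle hxC
    rcases max_cases (nextL L β₁) (nextL L β₂) with ⟨h, _⟩ | ⟨h, _⟩ <;> rw [hlam, h] at this
    · exact hxβ₁ (Or.inr this)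
    · exact hxβ₂ (Or.inr this)

include hcount hsurj hLub in
theorem phi_vanish {B : Set ℝ} (hBm : MeasurableSet B) (hBsub : B ⊆ Icc (0:ℝ) 1) :
    volume ((⋃ A ∈ {A | A ∈ NullSets ∧ A ⊆ B}, phi D L A) \ B) = 0 := by
  obtain ⟨βs, hβs⟩ := hsurj B hBm hBsub
  have key : ∀ A ∈ {A | A ∈ NullSets ∧ A ⊆ B}, phi D L A ⊆ B ∪ Cset D (nextL L βs) := by
    rintro A ⟨hA, hAB⟩
    rcases lt_or_ge βs (alphaIdx D L A) with hlt | hge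
    · have := phi_subset_term D L hlt (hβs.symm ▸ hAB)
      rwa [hβs] at this
    · exact (phi_subset_Cset D L hsurj hLub hA hge).trans subset_union_right
  have hsub : (⋃ A ∈ {A | A ∈ NullSets ∧ A ⊆ B}, phi D L A) \ B ⊆
      Cset D (nextL L βs) := by
    rintro x ⟨hx, hxB⟩
    obtain ⟨A, hA, hxA⟩ := Set.mem_iUnion₂.1 hx
    rcases key A hA hxA with h | h
    · exact absurd h hxB
    · exact h
  exact le_antisymm (le_trans (measure_mono hsub) (le_of_eq (Cset_null D hcount _)))
    (zero_le)

end Main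

end SVH

section Instantiation

open Cardinal SVH

/-- The base well-order of type `ω₁`. -/
private def W0 : Type := (Cardinal.aleph 1).ord.ToType

instance : LinearOrder W0 := inferInstanceAs (LinearOrder (Cardinal.aleph 1).ord.ToType)
instance : WellFoundedLT W0 := inferInstanceAs (WellFoundedLT (Cardinal.aleph 1).ord.ToType)

instance : Nonempty W0 := by
  refine Ordinal.toType_nonempty_iff_ne_zero.2 fun h => ?_
  exact (Cardinal.aleph_pos 1).ne' (Cardinal.ord_eq_zero.1 h)

instance : NoMaxOrder W0 := Cardinal.noMaxOrder (Cardinal.aleph0_le_aleph 1)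

theorem W0_Iio_countable (w : W0) : Set.Countable (Set.Iio w) :=
  (Cardinal.countable_iff_lt_aleph_one _).2 (Cardinal.mk_Iio_ord_toType w)

end Instantiation

theorem W0_Iic_countable (w : W0) : Set.Countable (Set.Iic w) := by
  rw [← Set.Iio_insert]
  exact (W0_Iio_countable w).insert w

section Build

open SVH

variable (g : W0 → {S : Set ℝ // MeasurableSet S ∧ S ⊆ Icc (0:ℝ) 1})
  (e : ∀ w : W0, ℕ → {v : W0 // v ≤ w})
  (sfin : ℕ → Finset ℕ)

/-- The index well-order: `ω₁` copies of `ℕ`. -/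
private def WW : Type := W0 ×ₗ ℕ

instance : LinearOrder WW := inferInstanceAs (LinearOrder (W0 ×ₗ ℕ))
instance : WellFoundedLT WW := inferInstanceAs (WellFoundedLT (W0 ×ₗ ℕ))
instance : Nonempty WW := ⟨toLex (Classical.arbitrary W0, 0)⟩

private def FF : W0 → Set ℝ := fun v => (g v : Set ℝ)

/-- The enumeration of Borel subsets of `[0,1]`. -/
private def DD : WW → Set ℝ := fun p =>
  ⋃ i ∈ sfin (ofLex p).2, FF g ((e (ofLex p).1 i : W0))

/-- The "limit" indices. -/
private def LL : Set WW := Set.range (fun w : W0 => (toLex (w, 0) : WW))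

theorem WW_count (γ : WW) : Set.Countable {β : WW | β < γ} := by
  haveI : Countable (Set.Iic ((ofLex γ).1)) := (W0_Iic_countable _).to_subtype
  refine Set.Countable.mono ?_
    (Set.countable_range (fun q : (Set.Iic ((ofLex γ).1) × ℕ) => (toLex (q.1.1, q.2) : WW)))
  intro β hβ
  have hlt : (ofLex β).1 < (ofLex γ).1 ∨
      ((ofLex β).1 = (ofLex γ).1 ∧ (ofLex β).2 < (ofLex γ).2) :=
    Prod.Lex.lt_iff.1 hβ
  have hle : (ofLex β).1 ≤ (ofLex γ).1 := by
    rcases hlt with h | h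
    · exact le_of_lt h
    · exact le_of_eq h.1
  exact ⟨(⟨(ofLex β).1, hle⟩, (ofLex β).2), rfl⟩

theorem DD_meas (β : WW) : MeasurableSet (DD g e sfin β) :=
  Finset.measurableSet_biUnion _ (fun i _ => (g _).2.1)

theorem DD_sub (β : WW) : DD g e sfin β ⊆ Icc (0:ℝ) 1 :=
  Set.iUnion₂_subset fun i _ => (g _).2.2

theorem DD_surj (hg : Function.Surjective g) (he : ∀ w, Function.Surjective (e w))
    (hsfin : Function.Surjective sfin) (S : Set ℝ) (hm : MeasurableSet S)
    (hs : S ⊆ Icc (0:ℝ) 1) : ∃ β, DD g e sfin β = S := by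
  obtain ⟨w, hw⟩ := hg ⟨S, hm, hs⟩
  obtain ⟨i, hi⟩ := he w ⟨w, le_refl w⟩
  obtain ⟨n, hn⟩ := hsfin {i}
  refine ⟨toLex (w, n), ?_⟩
  show ⋃ j ∈ sfin n, FF g ((e w j : W0)) = S
  rw [hn, Finset.set_biUnion_singleton, hi]
  show (g w : Set ℝ) = S
  rw [hw]

theorem LL_ub (β : WW) : ∃ lam ∈ LL, β < lam := by
  obtain ⟨w', hw'⟩ := exists_gt ((ofLex β).1)
  refine ⟨toLex (w', 0), ⟨w', rfl⟩, ?_⟩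
  exact Prod.Lex.lt_iff.2 (Or.inl hw')

theorem LL_close (he : ∀ w, Function.Surjective (e w)) (hsfin : Function.Surjective sfin)
    (lam : WW) (hlam : lam ∈ LL) (β₁ : WW) (hβ₁ : β₁ < lam) (β₂ : WW) (hβ₂ : β₂ < lam) :
    ∃ β₃ < lam, DD g e sfin β₃ = DD g e sfin β₁ ∪ DD g e sfin β₂ := by
  obtain ⟨w, rfl⟩ := hlam
  have h₁ : (ofLex β₁).1 < w := by
    rcases Prod.Lex.lt_iff.1 hβ₁ with h | h
    · exact h
    · exact absurd h.2 (Nat.not_lt_zero _)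
  have h₂ : (ofLex β₂).1 < w := by
    rcases Prod.Lex.lt_iff.1 hβ₂ with h | h
    · exact h
    · exact absurd h.2 (Nat.not_lt_zero _)
  set u₁ := (ofLex β₁).1
  set u₂ := (ofLex β₂).1
  set w₃ := max u₁ u₂ with hw₃
  choose K hK using he w₃
  set J₁ : ℕ → ℕ :=
    fun i => K ⟨(e u₁ i : W0), le_trans (e u₁ i).2 (le_max_left _ _)⟩ with hJ₁
  set J₂ : ℕ → ℕ :=
    fun i => K ⟨(e u₂ i : W0), le_trans (e u₂ i).2 (le_max_right _ _)⟩ with hJ₂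
  have hKJ₁ : ∀ i, ((e w₃ (J₁ i) : W0)) = ((e u₁ i : W0)) := by
    intro i
    rw [hJ₁]
    exact congrArg Subtype.val (hK _)
  have hKJ₂ : ∀ i, ((e w₃ (J₂ i) : W0)) = ((e u₂ i : W0)) := by
    intro i
    rw [hJ₂]
    exact congrArg Subtype.val (hK _)
  obtain ⟨m, hm⟩ := hsfin
    (((sfin (ofLex β₁).2).image J₁) ∪ ((sfin (ofLex β₂).2).image J₂))
  refine ⟨toLex (w₃, m), Prod.Lex.lt_iff.2 (Or.inl (max_lt h₁ h₂)), ?_⟩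
  have hDD₁ : DD g e sfin β₁ = ⋃ i ∈ sfin (ofLex β₁).2, FF g ((e u₁ i : W0)) := rfl
  have hDD₂ : DD g e sfin β₂ = ⋃ i ∈ sfin (ofLex β₂).2, FF g ((e u₂ i : W0)) := rfl
  have hDD₃ : DD g e sfin (toLex (w₃, m)) = ⋃ j ∈ sfin m, FF g ((e w₃ j : W0)) := rfl
  rw [hDD₁, hDD₂, hDD₃, hm]
  apply Set.Subset.antisymm
  · refine Set.iUnion₂_subset fun j hj => ?_
    rcases Finset.mem_union.1 hj with hj' | hj'
    · obtain ⟨i, hi, rfl⟩ := Finset.mem_image.1 hj'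
      rw [hKJ₁ i]
      exact fun x hx => Set.mem_union_left _ (Set.mem_iUnion₂.2 ⟨i, hi, hx⟩)
    · obtain ⟨i, hi, rfl⟩ := Finset.mem_image.1 hj'
      rw [hKJ₂ i]
      exact fun x hx => Set.mem_union_right _ (Set.mem_iUnion₂.2 ⟨i, hi, hx⟩)
  · refine Set.union_subset (Set.iUnion₂_subset fun i hi => ?_) (Set.iUnion₂_subset fun i hi => ?_)
    · rw [← hKJ₁ i]
      exact fun x hx => Set.mem_iUnion₂.2
        ⟨J₁ i, Finset.mem_union_left _ (Finset.mem_image_of_mem _ hi), hx⟩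
    · rw [← hKJ₂ i]
      exact fun x hx => Set.mem_iUnion₂.2
        ⟨J₂ i, Finset.mem_union_right _ (Finset.mem_image_of_mem _ hi), hx⟩

end Build

/-- Assuming CH, there is a monotone Borel hull operation `φ` on `N` which is moreover
subadditive, and such that for every Borel `B ⊆ [0,1]`, the union of `φ(A)` over all null
`A ⊆ B` exceeds `B` only by a null set. -/
theorem subadditive_vanishing_borel_hull_on_null_of_CH
    (hCH : (2 : Cardinal) ^ Cardinal.aleph0 = Cardinal.aleph 1) :
    ∃ φ : Set ℝ → Set ℝ, IsMonotoneHullOn NullSets MeasurableSet φ ∧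
      (∀ A ∈ NullSets, ∀ A' ∈ NullSets, φ (A ∪ A') ⊆ φ A ∪ φ A') ∧
      (∀ B : Set ℝ, MeasurableSet B → B ⊆ Icc (0:ℝ) 1 →
        volume ((⋃ A ∈ {A | A ∈ NullSets ∧ A ⊆ B}, φ A) \ B) = 0) := by
  classical
  -- a surjection from `W0` onto the Borel subsets of `[0,1]`, using CH
  have hW0 : Cardinal.mk W0 = Cardinal.aleph 1 := by
    show Cardinal.mk (Cardinal.aleph 1).ord.ToType = _
    rw [Cardinal.mk_toType, Cardinal.card_ord]
  have hcard : Cardinal.mk {S : Set ℝ // MeasurableSet S ∧ S ⊆ Icc (0:ℝ) 1} ≤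
      Cardinal.mk W0 := by
    have h1 : Cardinal.mk {S : Set ℝ // MeasurableSet S ∧ S ⊆ Icc (0:ℝ) 1} ≤
        Cardinal.mk {t : Set ℝ | MeasurableSet t} :=
      Cardinal.mk_le_of_injective
        (f := fun S => (⟨S.1, S.2.1⟩ : {t : Set ℝ | MeasurableSet t}))
        (by
          intro a b hab
          exact Subtype.ext (congrArg (fun t : {t : Set ℝ | MeasurableSet t} => t.val) hab))
    have h2 : Cardinal.mk {t : Set ℝ | MeasurableSet t} ≤ Cardinal.continuum := by
      have hgen : (Real.measurableSpace : MeasurableSpace ℝ)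
          = MeasurableSpace.generateFrom (Set.range (Iio : ℝ → Set ℝ)) :=
        BorelSpace.measurable_eq.trans (borel_eq_generateFrom_Iio ℝ)
      have h3 := MeasurableSpace.cardinal_measurableSet_le_continuum
        (α := ℝ) (s := Set.range (Iio : ℝ → Set ℝ))
        (Cardinal.mk_range_le.trans (le_of_eq Cardinal.mk_real))
      rw [hgen]
      exact h3
    have h4 : Cardinal.continuum = Cardinal.aleph 1 := by
      apply Cardinal.lift_injective.{u_1, 0}
      rw [Cardinal.lift_continuum, Cardinal.lift_aleph, Ordinal.lift_one,
        ← Cardinal.two_power_aleph0]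
      exact hCH
    rw [hW0]
    exact ((h1.trans h2).trans_eq h4)
  haveI : Nonempty {S : Set ℝ // MeasurableSet S ∧ S ⊆ Icc (0:ℝ) 1} :=
    ⟨⟨∅, MeasurableSet.empty, empty_subset _⟩⟩
  obtain ⟨f⟩ := (Cardinal.le_def _ _).1 hcard
  set g := Function.invFun f with hgdef
  have hg : Function.Surjective g := Function.invFun_surjective f.injective
  -- surjections enumerating the countable initial segments of `W0`
  have he' : ∀ w : W0, ∃ ew : ℕ → {v : W0 // v ≤ w}, Function.Surjective ew := by
    intro w
    haveI : Countable {v : W0 // v ≤ w} := (W0_Iic_countable w).to_subtype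
    haveI : Nonempty {v : W0 // v ≤ w} := ⟨⟨w, le_refl w⟩⟩
    exact exists_surjective_nat _
  choose e he using he'
  obtain ⟨sfin, hsfin⟩ := exists_surjective_nat (Finset ℕ)
  -- assemble the hull operation
  refine ⟨SVH.phi (DD g e sfin) LL, ⟨?_, ?_⟩, ?_, ?_⟩
  · intro A hA
    exact SVH.phi_hull (DD g e sfin) LL WW_count (DD_meas g e sfin) (DD_sub g e sfin)
      (DD_surj g e sfin hg he hsfin) LL_ub hA
  · intro A hA A' hA' hss
    exact SVH.phi_mono (DD g e sfin) LL (DD_surj g e sfin hg he hsfin) LL_ub hA hA' hss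
  · intro A hA A' hA'
    exact SVH.phi_subadd (DD g e sfin) LL (DD_surj g e sfin hg he hsfin) LL_ub
      (LL_close g e sfin he hsfin) hA hA'
  · intro B hBm hBsub
    exact SVH.phi_vanish (DD g e sfin) LL WW_count (DD_surj g e sfin hg he hsfin) LL_ub
      hBm hBsub
end
end

section
/- Suppose there exists a monotone map ψ : L → P([0,1]) such that ψ(M) is a Borel set with λ(M Δ ψ(M)) = 0 for every M ∈ L and M ⊆ M' implies ψ(M) ⊆ ψ(M'), and suppose there exists a monotone Borel hull operation φ on N satisfying: (1) φ(A ∪ A') ⊆ φ(A) ∪ φ(A') for all A, A' ∈ N, and (2) for every Borel set B ⊆ [0,1], the set (⋃{φ(A) : A ⊆ B, A ∈ N}) \ B is Lebesgue null. Then there exists a monotone Borel hull operation φ* on L which extends φ (i.e. φ*(A) = φ(A) for every A ∈ N). -/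
open MeasureTheory Set

noncomputable section

/-- Suppose `ψ : L → 𝒫([0,1])` is monotone, with `ψ(M)` Borel and `λ(M Δ ψ(M)) = 0`,
and suppose `φ` is a monotone Borel hull operation on `N` which is subadditive and such
that for every Borel `B ⊆ [0,1]` the union of `φ(A)` over all null `A ⊆ B` exceeds `B`
only by a null set. Then `φ` extends to a monotone Borel hull operation `φ*` on `L`. -/
theorem monotone_borel_hull_on_measurable_of_lifting_and_nice_null_hull
    (ψ : Set ℝ → Set ℝ)
    (hψ : ∀ M ∈ LebSets, MeasurableSet (ψ M) ∧ ψ M ⊆ Icc (0:ℝ) 1 ∧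
      volume (symmDiff M (ψ M)) = 0)
    (hψmono : ∀ M ∈ LebSets, ∀ M' ∈ LebSets, M ⊆ M' → ψ M ⊆ ψ M')
    (φ : Set ℝ → Set ℝ)
    (hφ : IsMonotoneHullOn NullSets MeasurableSet φ)
    (hsub : ∀ A ∈ NullSets, ∀ A' ∈ NullSets, φ (A ∪ A') ⊆ φ A ∪ φ A')
    (hvan : ∀ B : Set ℝ, MeasurableSet B → B ⊆ Icc (0:ℝ) 1 →
      volume ((⋃ A ∈ {A | A ∈ NullSets ∧ A ⊆ B}, φ A) \ B) = 0) :
    ∃ φs : Set ℝ → Set ℝ, IsMonotoneHullOn LebSets MeasurableSet φs ∧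
      ∀ A ∈ NullSets, φs A = φ A := by
  classical
  obtain ⟨hφ1, hφ2⟩ := hφ
  set U : Set ℝ → Set ℝ := fun B => ⋃ A ∈ {A | A ∈ NullSets ∧ A ⊆ B}, φ A with hUdef
  have hUsub : ∀ B, U B ⊆ Icc (0:ℝ) 1 := by
    intro B x hx
    simp only [hUdef, mem_iUnion, exists_prop] at hx
    obtain ⟨A, hA, hxA⟩ := hx
    exact (hφ1 A hA.1).2.1 hxA
  have hUmono : ∀ B B' : Set ℝ, B ⊆ B' → U B ⊆ U B' := by
    intro B B' hBB' x hx
    simp only [hUdef, mem_iUnion, exists_prop] at hx ⊢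
    obtain ⟨A, hA, hxA⟩ := hx
    exact ⟨A, ⟨hA.1, hA.2.trans hBB'⟩, hxA⟩
  have hφU : ∀ B : Set ℝ, ∀ A ∈ NullSets, A ⊆ B → φ A ⊆ U B := by
    intro B A hA hAB x hx
    simp only [hUdef, mem_iUnion, exists_prop]
    exact ⟨A, ⟨hA, hAB⟩, hx⟩
  -- key null sets attached to a measurable M
  have hd1 : ∀ M ∈ LebSets, (M \ ψ M) ∈ NullSets := by
    intro M hM
    refine ⟨fun x hx => hM.1 hx.1, ?_⟩
    have h := (hψ M hM).2.2
    refine measure_mono_null ?_ h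
    intro x hx
    rw [Set.mem_symmDiff]
    exact Or.inl ⟨hx.1, hx.2⟩
  have hd2 : ∀ M ∈ LebSets, (U (ψ M) \ ψ M) ∈ NullSets := by
    intro M hM
    refine ⟨fun x hx => hUsub _ hx.1, ?_⟩
    exact hvan (ψ M) (hψ M hM).1 (hψ M hM).2.1
  have hvolψ : ∀ M ∈ LebSets, volume (ψ M) = volume M := by
    intro M hM
    have h : M =ᵐ[volume] ψ M :=
      (MeasureTheory.measure_symmDiff_eq_zero_iff).1 (hψ M hM).2.2
    exact (measure_congr h).symm
  -- the extension
  set φs : Set ℝ → Set ℝ := fun M =>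
    if volume M = 0 then φ M
    else ψ M ∪ φ (M \ ψ M) ∪ φ (U (ψ M) \ ψ M) with hφsdef
  -- key monotonicity lemma
  have hkey : ∀ M' ∈ LebSets, ∀ N ∈ NullSets, N ⊆ M' ∪ U (ψ M') →
      φ N ⊆ ψ M' ∪ φ (M' \ ψ M') ∪ φ (U (ψ M') \ ψ M') := by
    intro M' hM' N hN hNsub
    have hN1 : (N ∩ ψ M') ∈ NullSets :=
      ⟨fun x hx => hN.1 hx.1, measure_mono_null inter_subset_left hN.2⟩
    have hN2 : (N \ ψ M') ∈ NullSets :=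
      ⟨fun x hx => hN.1 hx.1, measure_mono_null diff_subset hN.2⟩
    have hsplit : φ N ⊆ φ (N ∩ ψ M') ∪ φ (N \ ψ M') := by
      have : N = (N ∩ ψ M') ∪ (N \ ψ M') := (inter_union_diff N (ψ M')).symm
      calc φ N = φ ((N ∩ ψ M') ∪ (N \ ψ M')) := by rw [← this]
        _ ⊆ _ := hsub _ hN1 _ hN2
    intro x hx
    rcases hsplit hx with hx1 | hx2
    · -- x ∈ φ (N ∩ ψ M') ⊆ U (ψ M') ⊆ ψ M' ∪ φ (U (ψ M') \ ψ M')
      have hxU : x ∈ U (ψ M') := hφU (ψ M') _ hN1 inter_subset_right hx1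
      by_cases hxψ : x ∈ ψ M'
      · exact Or.inl (Or.inl hxψ)
      · exact Or.inr ((hφ1 _ (hd2 M' hM')).2.2.1 ⟨hxU, hxψ⟩)
    · -- x ∈ φ (N \ ψ M')
      set D : Set ℝ := (M' \ ψ M') ∪ (U (ψ M') \ ψ M') with hD
      have hDnull : D ∈ NullSets := by
        refine ⟨?_, ?_⟩
        · intro y hy
          rcases hy with hy | hy
          · exact hM'.1 hy.1
          · exact hUsub _ hy.1
        · rw [hD]
          exact measure_union_null (hd1 M' hM').2 (hd2 M' hM').2
      have hsubD : N \ ψ M' ⊆ D := by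
        intro y hy
        rcases hNsub hy.1 with hyM | hyU
        · exact Or.inl ⟨hyM, hy.2⟩
        · exact Or.inr ⟨hyU, hy.2⟩
      have : φ (N \ ψ M') ⊆ φ D := hφ2 _ hN2 _ hDnull hsubD
      have hDsplit : φ D ⊆ φ (M' \ ψ M') ∪ φ (U (ψ M') \ ψ M') :=
        hsub _ (hd1 M' hM') _ (hd2 M' hM')
      rcases hDsplit (this hx2) with h | h
      · exact Or.inl (Or.inr h)
      · exact Or.inr h
  refine ⟨φs, ⟨?_, ?_⟩, ?_⟩
  · -- hull properties
    intro M hM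
    by_cases h0 : volume M = 0
    · have hMnull : M ∈ NullSets := ⟨hM.1, h0⟩
      simp only [hφsdef, if_pos h0]
      exact hφ1 M hMnull
    · simp only [hφsdef, if_neg h0]
      have hm1 := hφ1 _ (hd1 M hM)
      have hm2 := hφ1 _ (hd2 M hM)
      refine ⟨?_, ?_, ?_, ?_⟩
      · exact (((hψ M hM).1.union hm1.1).union hm2.1)
      · intro x hx
        rcases hx with (hx | hx) | hx
        · exact (hψ M hM).2.1 hx
        · exact hm1.2.1 hx
        · exact hm2.2.1 hx
      · intro x hx
        by_cases hxψ : x ∈ ψ M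
        · exact Or.inl (Or.inl hxψ)
        · exact Or.inl (Or.inr (hm1.2.2.1 ⟨hx, hxψ⟩))
      · have e1 : volume (φ (M \ ψ M)) = 0 := hm1.2.2.2.trans (hd1 M hM).2
        have e2 : volume (φ (U (ψ M) \ ψ M)) = 0 := hm2.2.2.2.trans (hd2 M hM).2
        refine le_antisymm ?_ ?_
        · calc volume (ψ M ∪ φ (M \ ψ M) ∪ φ (U (ψ M) \ ψ M))
              ≤ volume (ψ M ∪ φ (M \ ψ M)) + volume (φ (U (ψ M) \ ψ M)) :=
                measure_union_le _ _
            _ = volume (ψ M ∪ φ (M \ ψ M)) := by rw [e2, add_zero]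
            _ ≤ volume (ψ M) + volume (φ (M \ ψ M)) := measure_union_le _ _
            _ = volume (ψ M) := by rw [e1, add_zero]
            _ = volume M := hvolψ M hM
        · refine measure_mono ?_
          intro x hx
          by_cases hxψ : x ∈ ψ M
          · exact Or.inl (Or.inl hxψ)
          · exact Or.inl (Or.inr (hm1.2.2.1 ⟨hx, hxψ⟩))
  · -- monotonicity
    intro M hM M' hM' hMM'
    by_cases h0 : volume M = 0
    · have hMnull : M ∈ NullSets := ⟨hM.1, h0⟩
      by_cases h0' : volume M' = 0
      · simp only [hφsdef, if_pos h0, if_pos h0']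
        exact hφ2 M hMnull M' ⟨hM'.1, h0'⟩ hMM'
      · simp only [hφsdef, if_pos h0, if_neg h0']
        exact hkey M' hM' M hMnull (fun x hx => Or.inl (hMM' hx))
    · have h0' : volume M' ≠ 0 := fun h => h0 (le_antisymm ((measure_mono hMM').trans h.le) zero_le)
      simp only [hφsdef, if_neg h0, if_neg h0']
      intro x hx
      rcases hx with (hx | hx) | hx
      · exact Or.inl (Or.inl (hψmono M hM M' hM' hMM' hx))
      · exact hkey M' hM' _ (hd1 M hM) (fun y hy => Or.inl (hMM' hy.1)) hx
      · refine hkey M' hM' _ (hd2 M hM) ?_ hx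
        intro y hy
        have : y ∈ U (ψ M) := hy.1
        exact Or.inr (hUmono _ _ (hψmono M hM M' hM' hMM') this)
  · -- extension
    intro A hA
    simp only [hφsdef, if_pos hA.2]
end
end

section
/- Suppose there exists a monotone map ψ : L → P([0,1]) such that ψ(M) is a G_δ set with λ(M Δ ψ(M)) = 0 for every M ∈ L and M ⊆ M' implies ψ(M) ⊆ ψ(M'), and suppose there exists a monotone G_δ hull operation φ on N satisfying: (1) φ(A ∪ A') ⊆ φ(A) ∪ φ(A') for all A, A' ∈ N, and (2) for every G_δ set G ⊆ [0,1], the set (⋃{φ(A) : A ⊆ G, A ∈ N}) \ G is Lebesgue null. Then there exists a monotone G_δ hull operation φ* on L which extends φ (i.e. φ*(A) = φ(A) for every A ∈ N). -/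
open MeasureTheory Set

noncomputable section

/-- Suppose `ψ : L → 𝒫([0,1])` is monotone, with `ψ(M)` a Gδ set and `λ(M Δ ψ(M)) = 0`,
and suppose `φ` is a monotone Gδ hull operation on `N` which is subadditive and such
that for every Gδ set `G ⊆ [0,1]` the union of `φ(A)` over all null `A ⊆ G` exceeds `G`
only by a null set. Then `φ` extends to a monotone Gδ hull operation `φ*` on `L`. -/
theorem monotone_Gdelta_hull_on_measurable_of_lifting_and_nice_null_hull
    (ψ : Set ℝ → Set ℝ)
    (hψ : ∀ M ∈ LebSets, IsGδ (ψ M) ∧ ψ M ⊆ Icc (0:ℝ) 1 ∧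
      volume (symmDiff M (ψ M)) = 0)
    (hψmono : ∀ M ∈ LebSets, ∀ M' ∈ LebSets, M ⊆ M' → ψ M ⊆ ψ M')
    (φ : Set ℝ → Set ℝ)
    (hφ : IsMonotoneHullOn NullSets IsGδ φ)
    (hsub : ∀ A ∈ NullSets, ∀ A' ∈ NullSets, φ (A ∪ A') ⊆ φ A ∪ φ A')
    (hvan : ∀ G : Set ℝ, IsGδ G → G ⊆ Icc (0:ℝ) 1 →
      volume ((⋃ A ∈ {A | A ∈ NullSets ∧ A ⊆ G}, φ A) \ G) = 0) :
    ∃ φs : Set ℝ → Set ℝ, IsMonotoneHullOn LebSets IsGδ φs ∧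
      ∀ A ∈ NullSets, φs A = φ A := by
  classical
  obtain ⟨hφh, hφm⟩ := hφ
  set U : Set ℝ → Set ℝ := fun G => ⋃ A ∈ {A | A ∈ NullSets ∧ A ⊆ G}, φ A with hUdef
  have hUsub : ∀ G, U G ⊆ Icc (0:ℝ) 1 := fun G =>
    iUnion₂_subset fun A hA => (hφh A hA.1).2.1
  have hUmono : ∀ {G G' : Set ℝ}, G ⊆ G' → U G ⊆ U G' := by
    intro G G' hGG'
    exact iUnion₂_mono' fun A hA => ⟨A, ⟨hA.1, hA.2.trans hGG'⟩, subset_rfl⟩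
  have memU : ∀ A ∈ NullSets, ∀ {G : Set ℝ}, A ⊆ G → φ A ⊆ U G := by
    intro A hA G hAG
    exact subset_iUnion₂ (s := fun A _ => φ A) A ⟨hA, hAG⟩
  have nullOf : ∀ {A B : Set ℝ}, B ∈ NullSets → A ⊆ B → A ∈ NullSets := by
    intro A B hB hAB
    exact ⟨hAB.trans hB.1, le_antisymm ((measure_mono hAB).trans hB.2.le) zero_le⟩
  have hsplit : ∀ A ∈ NullSets, ∀ G : Set ℝ, φ A ⊆ φ (A ∩ G) ∪ φ (A \ G) := by
    intro A hA G
    have h1 : A ∩ G ∈ NullSets := nullOf hA inter_subset_left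
    have h2 : A \ G ∈ NullSets := nullOf hA diff_subset
    have he : φ A = φ ((A ∩ G) ∪ (A \ G)) := by rw [Set.inter_union_diff]
    rw [he]; exact hsub _ h1 _ h2
  -- basic null facts for a measurable M
  have facts : ∀ M ∈ LebSets, (U (ψ M) \ ψ M ∈ NullSets) ∧ (M \ ψ M ∈ NullSets) ∧
      (ψ M \ M ∈ NullSets) := by
    intro M hM
    obtain ⟨hGδ, hIcc, hsd⟩ := hψ M hM
    refine ⟨⟨diff_subset.trans (hUsub _), hvan _ hGδ hIcc⟩, ?_, ?_⟩
    · refine ⟨diff_subset.trans hM.1, le_antisymm (le_trans (measure_mono ?_) hsd.le) zero_le⟩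
      intro x hx; exact mem_symmDiff.mpr (Or.inl ⟨hx.1, hx.2⟩)
    · refine ⟨diff_subset.trans hIcc, le_antisymm (le_trans (measure_mono ?_) hsd.le) zero_le⟩
      intro x hx; exact mem_symmDiff.mpr (Or.inr ⟨hx.1, hx.2⟩)
  -- the core absorption lemma
  have core : ∀ M' ∈ LebSets, ∀ A ∈ NullSets, A ⊆ M' ∪ U (ψ M') →
      φ A ⊆ (ψ M' ∪ φ (U (ψ M') \ ψ M')) ∪ φ (M' \ ψ M') := by
    intro M' hM' A hA hAsub
    obtain ⟨hUnull, hMd, -⟩ := facts M' hM'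
    have hUT : U (ψ M') ⊆ (ψ M' ∪ φ (U (ψ M') \ ψ M')) ∪ φ (M' \ ψ M') := by
      intro x hx
      by_cases hxψ : x ∈ ψ M'
      · exact Or.inl (Or.inl hxψ)
      · exact Or.inl (Or.inr ((hφh _ hUnull).2.2.1 ⟨hx, hxψ⟩))
    refine (hsplit A hA (ψ M')).trans (union_subset ?_ ?_)
    · exact (memU _ (nullOf hA inter_subset_left) inter_subset_right).trans hUT
    · have hN : (M' \ ψ M') ∪ (U (ψ M') \ ψ M') ∈ NullSets := by
        refine ⟨union_subset hMd.1 hUnull.1, ?_⟩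
        have h := measure_union_le (μ := volume) (M' \ ψ M') (U (ψ M') \ ψ M')
        rw [hMd.2, hUnull.2, add_zero] at h
        exact le_antisymm h zero_le
      have hsub2 : A \ ψ M' ⊆ (M' \ ψ M') ∪ (U (ψ M') \ ψ M') := by
        intro x hx
        rcases hAsub hx.1 with h | h
        · exact Or.inl ⟨h, hx.2⟩
        · exact Or.inr ⟨h, hx.2⟩
      refine ((hφm _ (nullOf hA diff_subset) _ hN hsub2).trans
        ((hsub _ hMd _ hUnull).trans (union_subset ?_ ?_)))
      · exact fun x hx => Or.inr hx
      · exact fun x hx => Or.inl (Or.inr hx)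
  refine ⟨fun M => if M ∈ NullSets then φ M
    else (ψ M ∪ φ (U (ψ M) \ ψ M)) ∪ φ (M \ ψ M), ⟨?_, ?_⟩, ?_⟩
  · -- hull properties
    intro M hM
    by_cases hMn : M ∈ NullSets
    · simp only [if_pos hMn]; exact hφh M hMn
    · simp only [if_neg hMn]
      obtain ⟨hGδ, hIcc, hsd⟩ := hψ M hM
      obtain ⟨hUnull, hMd, hψd⟩ := facts M hM
      have hMsub : M ⊆ (ψ M ∪ φ (U (ψ M) \ ψ M)) ∪ φ (M \ ψ M) := by
        intro x hx
        by_cases hxψ : x ∈ ψ M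
        · exact Or.inl (Or.inl hxψ)
        · exact Or.inr ((hφh _ hMd).2.2.1 ⟨hx, hxψ⟩)
      refine ⟨(hGδ.union (hφh _ hUnull).1).union (hφh _ hMd).1,
        union_subset (union_subset hIcc (hφh _ hUnull).2.1) (hφh _ hMd).2.1, hMsub, ?_⟩
      have hφU0 : volume (φ (U (ψ M) \ ψ M)) = 0 := by
        rw [(hφh _ hUnull).2.2.2]; exact hUnull.2
      have hφM0 : volume (φ (M \ ψ M)) = 0 := by
        rw [(hφh _ hMd).2.2.2]; exact hMd.2
      have hψle : volume (ψ M) ≤ volume M := by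
        calc volume (ψ M) ≤ volume (M ∪ (ψ M \ M)) := by
              refine measure_mono ?_
              intro x hx
              by_cases h : x ∈ M
              · exact Or.inl h
              · exact Or.inr ⟨hx, h⟩
          _ ≤ volume M + volume (ψ M \ M) := measure_union_le _ _
          _ = volume M := by rw [hψd.2, add_zero]
      refine le_antisymm ?_ (measure_mono hMsub)
      calc volume ((ψ M ∪ φ (U (ψ M) \ ψ M)) ∪ φ (M \ ψ M))
          ≤ volume (ψ M ∪ φ (U (ψ M) \ ψ M)) + volume (φ (M \ ψ M)) := measure_union_le _ _
        _ ≤ (volume (ψ M) + volume (φ (U (ψ M) \ ψ M))) + volume (φ (M \ ψ M)) :=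
            add_le_add_left (measure_union_le _ _) _
        _ = volume (ψ M) := by rw [hφU0, hφM0, add_zero, add_zero]
        _ ≤ volume M := hψle
  · -- monotonicity
    intro M hM M' hM' hMM'
    by_cases hMn : M ∈ NullSets
    · by_cases hM'n : M' ∈ NullSets
      · simp only [if_pos hMn, if_pos hM'n]
        exact hφm M hMn M' hM'n hMM'
      · simp only [if_pos hMn, if_neg hM'n]
        exact core M' hM' M hMn (hMM'.trans subset_union_left)
    · have hM'n : M' ∉ NullSets := by
        intro h
        exact hMn ⟨hM.1, le_antisymm ((measure_mono hMM').trans h.2.le) zero_le⟩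
      simp only [if_neg hMn, if_neg hM'n]
      have hψψ : ψ M ⊆ ψ M' := hψmono M hM M' hM' hMM'
      obtain ⟨hUnull, hMd, -⟩ := facts M hM
      refine union_subset (union_subset ?_ ?_) ?_
      · exact fun x hx => Or.inl (Or.inl (hψψ hx))
      · exact core M' hM' _ hUnull ((diff_subset.trans (hUmono hψψ)).trans subset_union_right)
      · exact core M' hM' _ hMd ((diff_subset.trans hMM').trans subset_union_left)
  · intro A hA
    simp only [if_pos hA]
end
end

section
/- Let ξ be an ordinal with ξ ≤ add(N) (identifying the cardinal add(N) with its initial ordinal), and let (M_α)_{α<ξ} be subsets of [0,1] with M_α ⊆ M_β whenever α ≤ β < ξ. Then there exists a family (A_α)_{α<ξ} of G_δ subsets of [0,1] such that A_α is a hull of M_α for every α < ξ (i.e. M_α ⊆ A_α and λ*(A_α) = λ*(M_α)) and A_α ⊆ A_β whenever α ≤ β < ξ. -/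
open MeasureTheory Set

noncomputable section

/-- Every subset of `ℝ` admits a Gδ hull (inside `[0,1]`, after intersecting with it). -/
theorem hull_exists (S : Set ℝ) :
    ∃ H : Set ℝ, IsGδ H ∧ H ⊆ Icc (0:ℝ) 1 ∧ S ∩ Icc (0:ℝ) 1 ⊆ H ∧
      volume H = volume (S ∩ Icc (0:ℝ) 1) := by
  set T := S ∩ Icc (0:ℝ) 1 with hT
  have hTfin : volume T ≠ ⊤ := by
    refine ne_top_of_le_ne_top ?_ (measure_mono inter_subset_right)
    simp [Real.volume_Icc]
  have hU : ∀ n : ℕ, ∃ U, T ⊆ U ∧ IsOpen U ∧ volume U < volume T + (n : ENNReal)⁻¹ := by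
    intro n
    obtain ⟨U, h1, h2, h3⟩ := Set.exists_isOpen_lt_of_lt T (volume T + (n : ENNReal)⁻¹)
      (ENNReal.lt_add_right hTfin (by simp))
    exact ⟨U, h1, h2, h3⟩
  choose U hUT hUo hUv using hU
  refine ⟨(⋂ n, U n) ∩ Icc (0:ℝ) 1, ?_, inter_subset_right, ?_, ?_⟩
  · exact ((IsGδ.iInter fun n => (hUo n).isGδ).inter isClosed_Icc.isGδ)
  · exact subset_inter (subset_iInter fun n => hUT n) inter_subset_right
  · refine le_antisymm ?_ (measure_mono (subset_inter (subset_iInter fun n => hUT n)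
      inter_subset_right))
    refine ENNReal.le_of_forall_pos_le_add fun ε hε _ => ?_
    obtain ⟨n, hn⟩ : ∃ n : ℕ, (n : ENNReal)⁻¹ < (ε : ENNReal) :=
      ENNReal.exists_inv_nat_lt (by exact_mod_cast hε.ne')
    calc volume ((⋂ n, U n) ∩ Icc (0:ℝ) 1)
        ≤ volume (U n) := measure_mono (inter_subset_left.trans (iInter_subset _ n))
      _ ≤ volume T + (n : ENNReal)⁻¹ := (hUv n).le
      _ ≤ volume T + ε := add_le_add_right hn.le _

/-- A chosen Gδ hull of `S ∩ [0,1]`. -/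
def ghull (S : Set ℝ) : Set ℝ := Classical.choose (hull_exists S)

theorem ghull_isGδ (S : Set ℝ) : IsGδ (ghull S) := (Classical.choose_spec (hull_exists S)).1

theorem ghull_subset_Icc (S : Set ℝ) : ghull S ⊆ Icc (0:ℝ) 1 :=
  (Classical.choose_spec (hull_exists S)).2.1

theorem subset_ghull (S : Set ℝ) : S ∩ Icc (0:ℝ) 1 ⊆ ghull S :=
  (Classical.choose_spec (hull_exists S)).2.2.1

theorem volume_ghull (S : Set ℝ) : volume (ghull S) = volume (S ∩ Icc (0:ℝ) 1) :=
  (Classical.choose_spec (hull_exists S)).2.2.2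

/-- The recursively defined monotone family of hulls. -/
def Afam (M : Ordinal → Set ℝ) : Ordinal → Set ℝ :=
  Ordinal.lt_wf.fix fun α ih =>
    ghull (M α) ∪ ghull ((⋃ β : Iio α, ih β.1 β.2) \ ghull (M α))

theorem Afam_eq (M : Ordinal → Set ℝ) (α : Ordinal) :
    Afam M α = ghull (M α) ∪ ghull ((⋃ β : Iio α, Afam M β.1) \ ghull (M α)) :=
  Ordinal.lt_wf.fix_eq _ α

/-- Every increasing chain of subsets of `[0,1]` of order type `ξ ≤ add(N)` admits an
increasing family of Gδ hulls. Here `volume` applied to an arbitrary set is the Lebesgue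
outer measure, and the cardinal `add(N)` is identified with its initial ordinal. -/
theorem monotone_Gdelta_hull_on_short_wellordered_chain
    (ξ : Ordinal) (hξ : ξ ≤ addNull.ord) (M : Ordinal → Set ℝ)
    (hM : ∀ α < ξ, M α ⊆ Icc (0:ℝ) 1)
    (hmono : ∀ α β : Ordinal, α ≤ β → β < ξ → M α ⊆ M β) :
    ∃ A : Ordinal → Set ℝ,
      (∀ α < ξ, IsGδ (A α) ∧ A α ⊆ Icc (0:ℝ) 1 ∧ M α ⊆ A α ∧
        volume (A α) = volume (M α)) ∧
      (∀ α β : Ordinal, α ≤ β → β < ξ → A α ⊆ A β) := by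
  classical
  set A := Afam M with hA
  have hIccfin : volume (Icc (0:ℝ) 1) ≠ ⊤ := by simp [Real.volume_Icc]
  have key : ∀ α, α < ξ → IsGδ (A α) ∧ A α ⊆ Icc (0:ℝ) 1 ∧ M α ⊆ A α ∧
      volume (A α) = volume (M α) := by
    intro α
    induction α using Ordinal.induction with
    | h α IH =>
      intro hα
      have hMα : M α ⊆ Icc (0:ℝ) 1 := hM α hα
      set H := ghull (M α) with hH
      have hMH : M α ⊆ H := by
        have := subset_ghull (M α)
        rwa [inter_eq_left.mpr hMα] at this
      have hvolH : volume H = volume (M α) := by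
        rw [hH, volume_ghull, inter_eq_left.mpr hMα]
      set Uu := (⋃ β : Iio α, A β.1) \ H with hUu
      -- each piece is null
      have hpiece : ∀ β : Iio α, A β.1 \ H ⊆ Icc (0:ℝ) 1 ∧ volume (A β.1 \ H) = 0 := by
        intro β
        obtain ⟨_, hβIcc, hβsub, hβvol⟩ := IH β.1 β.2 (β.2.trans hα)
        refine ⟨diff_subset.trans hβIcc, ?_⟩
        have hfin : volume (A β.1) ≠ ⊤ :=
          ne_top_of_le_ne_top hIccfin (measure_mono hβIcc)
        have hinter : volume (A β.1 ∩ H) = volume (A β.1) := by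
          refine le_antisymm (measure_mono inter_subset_left) ?_
          calc volume (A β.1) = volume (M β.1) := hβvol
            _ ≤ volume (A β.1 ∩ H) := measure_mono (subset_inter hβsub
                ((hmono β.1 α β.2.le hα).trans hMH))
        have := measure_inter_add_diff (μ := volume) (A β.1) (ghull_isGδ (M α)).measurableSet
        rw [hinter] at this
        have h2 : volume (A β.1) + volume (A β.1 \ H) = volume (A β.1) + 0 := by
          simpa using this
        exact (ENNReal.add_right_inj hfin).mp h2
      -- the union is null, by add(N)
      have hUnull : volume (⋃ β : Iio α, (A β.1 \ H)) = 0 := by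
        by_contra hne
        set f : Iio α → Set ℝ := fun β => A β.1 \ H with hf
        have hmemset : addNull ≤ Cardinal.mk (range f) := by
          refine csInf_le' ?_
          refine ⟨range f, ?_, ?_, rfl⟩
          · rintro B ⟨β, rfl⟩
            exact ⟨(hpiece β).1, (hpiece β).2⟩
          · rwa [sUnion_range]
        have h1 := Cardinal.mk_range_le_lift (f := f)
        rw [Ordinal.mk_Iio_ordinal, Cardinal.lift_lift] at h1
        have h2 : Cardinal.mk (range f) ≤ α.card := by
          rwa [Cardinal.lift_le] at h1
        have h3 : α.card < addNull := Cardinal.lt_ord.mp (hα.trans_le hξ)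
        exact absurd ((hmemset.trans h2).trans_lt h3) (lt_irrefl _)
      have hUunull : volume Uu = 0 := by
        rw [hUu, iUnion_diff] at *
        exact hUnull
      have hghullnull : volume (ghull Uu) = 0 := by
        rw [volume_ghull]
        exact measure_mono_null inter_subset_left hUunull
      have hAeq : A α = H ∪ ghull Uu := Afam_eq M α
      refine ⟨?_, ?_, ?_, ?_⟩
      · rw [hAeq]; exact (ghull_isGδ _).union (ghull_isGδ _)
      · rw [hAeq]; exact union_subset (ghull_subset_Icc _) (ghull_subset_Icc _)
      · rw [hAeq]; exact hMH.trans subset_union_left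
      · rw [hAeq]
        refine le_antisymm ?_ (measure_mono (hMH.trans subset_union_left))
        calc volume (H ∪ ghull Uu) ≤ volume H + volume (ghull Uu) := measure_union_le _ _
          _ = volume (M α) := by rw [hvolH, hghullnull, add_zero]
  refine ⟨A, fun α hα => key α hα, ?_⟩
  intro α β hab hβ
  rcases hab.lt_or_eq with h | rfl
  · have hAeq : A β = ghull (M β) ∪ ghull ((⋃ γ : Iio β, A γ.1) \ ghull (M β)) := Afam_eq M β
    intro x hx
    rw [hAeq]
    by_cases hxH : x ∈ ghull (M β)
    · exact Or.inl hxH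
    · right
      refine subset_ghull _ ⟨⟨?_, hxH⟩, (key α (h.trans hβ)).2.1 hx⟩
      exact mem_iUnion.2 ⟨⟨α, h⟩, hx⟩
  · exact subset_rfl
end
end

section
/- Let η be an ordinal with η < add(N)⁺ (the successor cardinal of add(N), cardinals identified with their initial ordinals), and let (M_α)_{α<η} be subsets of [0,1] with M_α ⊆ M_β whenever α ≤ β < η. Then there exists a family (A_α)_{α<η} of G_δ subsets of [0,1] such that A_α is a hull of M_α for every α < η (i.e. M_α ⊆ A_α and λ*(A_α) = λ*(M_α)) and A_α ⊆ A_β whenever α ≤ β < η. -/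
open MeasureTheory Set

noncomputable section

open Ordinal Function
open scoped ENNReal

namespace MGH

lemma vol_ne_top {s : Set ℝ} (h : s ⊆ Icc (0:ℝ) 1) : volume s ≠ ⊤ :=
  ((measure_mono h).trans_lt isCompact_Icc.measure_lt_top).ne

lemma exists_hull (s : Set ℝ) :
    ∃ G : Set ℝ, IsGδ G ∧ G ⊆ Icc (0:ℝ) 1 ∧ s ∩ Icc (0:ℝ) 1 ⊆ G ∧
      volume G = volume (s ∩ Icc (0:ℝ) 1) := by
  set t := s ∩ Icc (0:ℝ) 1 with ht
  have htI : t ⊆ Icc (0:ℝ) 1 := inter_subset_right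
  have hfin : volume t ≠ ⊤ := vol_ne_top htI
  have H : ∀ n : ℕ, ∃ O : Set ℝ, t ⊆ O ∧ IsOpen O ∧
      volume O < volume t + ((n : ℝ≥0∞) + 1)⁻¹ := by
    intro n
    obtain ⟨U, hU1, hU2, hU3⟩ :=
      Set.exists_isOpen_lt_of_lt t (volume t + ((n : ℝ≥0∞) + 1)⁻¹) (ENNReal.lt_add_right hfin
        (by simp [ENNReal.inv_ne_zero, (Nat.cast_add_one_ne_zero n)]))
    exact ⟨U, hU1, hU2, hU3⟩
  choose O hO hOopen hOvol using H
  refine ⟨(⋂ n, O n) ∩ Icc 0 1, (IsGδ.iInter fun n => (hOopen n).isGδ).inter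
    isClosed_Icc.isGδ, inter_subset_right, ?_, ?_⟩
  · exact subset_inter (subset_iInter fun n => (hO n)) htI
  · refine le_antisymm ?_ (measure_mono (subset_inter (subset_iInter fun n => hO n) htI))
    refine ENNReal.le_of_forall_pos_le_add fun ε hε _ => ?_
    obtain ⟨n, hn⟩ := ENNReal.exists_inv_nat_lt (a := (ε:ℝ≥0∞)) (by simpa using hε.ne')
    calc volume ((⋂ n, O n) ∩ Icc 0 1) ≤ volume (O n) :=
          measure_mono ((inter_subset_left).trans (iInter_subset _ n))
      _ ≤ volume t + ((n : ℝ≥0∞) + 1)⁻¹ := (hOvol n).le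
      _ ≤ volume t + (ε : ℝ≥0∞) := by
          gcongr
          refine le_trans ?_ hn.le
          gcongr
          simp

def hull (s : Set ℝ) : Set ℝ := (exists_hull s).choose

lemma hull_isGδ (s : Set ℝ) : IsGδ (hull s) := (exists_hull s).choose_spec.1
lemma hull_subset_Icc (s : Set ℝ) : hull s ⊆ Icc (0:ℝ) 1 :=
  (exists_hull s).choose_spec.2.1
lemma subset_hull (s : Set ℝ) : s ∩ Icc (0:ℝ) 1 ⊆ hull s :=
  (exists_hull s).choose_spec.2.2.1
lemma vol_hull (s : Set ℝ) : volume (hull s) = volume (s ∩ Icc (0:ℝ) 1) :=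
  (exists_hull s).choose_spec.2.2.2
lemma hull_meas (s : Set ℝ) : MeasurableSet (hull s) := (hull_isGδ s).measurableSet
lemma subset_hull' {s : Set ℝ} (h : s ⊆ Icc (0:ℝ) 1) : s ⊆ hull s := by
  intro x hx; exact subset_hull s ⟨hx, h hx⟩
lemma vol_hull' {s : Set ℝ} (h : s ⊆ Icc (0:ℝ) 1) : volume (hull s) = volume s := by
  rw [vol_hull, inter_eq_self_of_subset_left h]

def fseq (a : Ordinal) (i : Ordinal) : Ordinal :=
  if h : i < a.cof.ord then (Ordinal.exists_fundamental_sequence a).choose i h else 0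

lemma fseq_lt {a i : Ordinal} (h : i < a.cof.ord) : fseq a i < a := by
  rw [fseq, dif_pos h]
  exact (Ordinal.exists_fundamental_sequence a).choose_spec.lt h

lemma fseq_cofinal {a x : Ordinal} (hx : x < a) :
    ∃ i, i < a.cof.ord ∧ x ≤ fseq a i := by
  have hb := (Ordinal.exists_fundamental_sequence a).choose_spec.blsub_eq
  rw [← hb] at hx
  obtain ⟨i, hi, hxi⟩ := Ordinal.lt_blsub_iff.1 hx
  exact ⟨i, hi, by rwa [fseq, dif_pos hi]⟩

/-- union of a small family of null subsets of `[0,1]` is null -/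
lemma null_of_small {ι : Type} (S : ι → Set ℝ) (hc : Cardinal.mk ι < addNull)
    (hS : ∀ i, S i ⊆ Icc (0:ℝ) 1 ∧ volume (S i) = 0) : volume (⋃ i, S i) = 0 := by
  by_contra h
  have hmem : Cardinal.mk (range S) ∈
      { c | ∃ F : Set (Set ℝ), (∀ A ∈ F, A ∈ NullSets) ∧ volume (⋃₀ F) ≠ 0 ∧
        c = Cardinal.mk F } := by
    refine ⟨range S, ?_, ?_, rfl⟩
    · rintro A ⟨i, rfl⟩; exact ⟨(hS i).1, (hS i).2⟩
    · rwa [sUnion_range]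
  have h1 : addNull ≤ Cardinal.mk (range S) := csInf_le' hmem
  exact absurd (h1.trans Cardinal.mk_range_le) hc.not_ge

lemma bUnion_null (i : Ordinal.{0}) (hc : i.card < addNull) (E : Ordinal → Set ℝ)
    (hE : ∀ j < i, E j ⊆ Icc (0:ℝ) 1 ∧ volume (E j) = 0) :
    volume (⋃ j : Iio i, E j.1) = 0 := by
  have e : (Iio i) ≃ i.ToType := (Ordinal.ToType.mk (o := i)).toEquiv
  have : (⋃ x : i.ToType, E (e.symm x).1) = ⋃ j : Iio i, E j.1 :=
    Surjective.iUnion_comp e.symm.surjective (fun j => E j.1)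
  rw [← this]
  refine null_of_small _ ?_ ?_
  · rwa [Cardinal.mk_toType]
  · intro x; exact hE _ (e.symm x).2

lemma diff_null {G H s : Set ℝ} (hG : MeasurableSet G) (hH : MeasurableSet H)
    (hsG : s ⊆ G) (hsH : s ⊆ H) (hvol : volume G = volume s)
    (hfin : volume G ≠ ⊤) : volume (G \ H) = 0 := by
  have h1 : volume (G ∩ H) + volume (G \ H) = volume G := measure_inter_add_diff G hH
  have h2 : volume G ≤ volume (G ∩ H) := by
    rw [hvol]; exact measure_mono (subset_inter hsG hsH)
  have hne : volume (G ∩ H) ≠ ⊤ :=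
    fun ht => hfin (top_le_iff.1 (ht ▸ measure_mono inter_subset_left))
  have h3 : volume (G ∩ H) + volume (G \ H) ≤ volume (G ∩ H) + 0 := by
    rw [add_zero, h1]; exact h2
  simpa using (ENNReal.add_le_add_iff_left hne).1 h3

variable (η : Ordinal.{0}) (M : Ordinal.{0} → Set ℝ)

def Mt (α : Ordinal) : Set ℝ := ⋃ β ∈ {β : Ordinal | β ≤ α ∧ β < η}, (M β ∩ Icc 0 1)

def rr (α : Ordinal) : ℝ≥0∞ := volume (Mt η M α)

def J (α : Ordinal) : Ordinal := sInf {β | rr η M β = rr η M α}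

def dl (α : Ordinal) : Ordinal := sInf ({β | α < β ∧ rr η M β ≠ rr η M α} ∪ {η})

lemma J_le (α : Ordinal) : J η M α ≤ α := csInf_le' rfl

def cIdx (d i : Ordinal) : Ordinal := max d (fseq (dl η M d) i)

def Esc (B : Set ℝ) (d : Ordinal) : Ordinal → Set ℝ
  | i =>
    hull ((Mt η M (cIdx η M d i) \ B) ∪ ⋃ j : Iio i, Esc B d j.1) ∩
      hull (Mt η M (dl η M d))
  termination_by i => i
  decreasing_by exact j.2

def idx (α : Ordinal) : Ordinal := sInf {i | α ≤ cIdx η M (J η M α) i}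

def Ax : Ordinal → Set ℝ
  | α =>
    if h : J η M α = α then hull (Mt η M α ∪ ⋃ β : Iio α, Ax β.1)
    else Ax (J η M α) ∪ Esc η M (Ax (J η M α)) (J η M α) (idx η M α)
  termination_by α => α
  decreasing_by
    · exact β.2
    all_goals exact (J_le η M α).lt_of_ne h

lemma Esc_def (B : Set ℝ) (d i : Ordinal) :
    Esc η M B d i = hull ((Mt η M (cIdx η M d i) \ B) ∪ ⋃ j : Iio i, Esc η M B d j.1) ∩
      hull (Mt η M (dl η M d)) := by
  rw [Esc]

lemma Ax_def (α : Ordinal) :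
    Ax η M α = if _h : J η M α = α then hull (Mt η M α ∪ ⋃ β : Iio α, Ax η M β.1)
    else Ax η M (J η M α) ∪ Esc η M (Ax η M (J η M α)) (J η M α) (idx η M α) := by
  rw [Ax]

/-! ### basic lemmas on `Mt`, `rr`, `J`, `dl` -/

lemma Mt_subset_Icc (α : Ordinal) : Mt η M α ⊆ Icc (0:ℝ) 1 := by
  refine iUnion₂_subset fun β _ => inter_subset_right

lemma Mt_mono {β α : Ordinal} (h : β ≤ α) : Mt η M β ⊆ Mt η M α := by
  intro x hx
  rw [Mt, mem_iUnion₂] at hx ⊢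
  obtain ⟨γ, hγ, hxγ⟩ := hx
  exact ⟨γ, ⟨hγ.1.trans h, hγ.2⟩, hxγ⟩

lemma rr_mono {β α : Ordinal} (h : β ≤ α) : rr η M β ≤ rr η M α :=
  measure_mono (Mt_mono η M h)

lemma rr_ne_top (α : Ordinal) : rr η M α ≠ ⊤ := vol_ne_top (Mt_subset_Icc η M α)

lemma rr_J (α : Ordinal) : rr η M (J η M α) = rr η M α :=
  csInf_mem (⟨α, rfl⟩ : Set.Nonempty {β | rr η M β = rr η M α})

lemma J_eq_of_rr_eq {β α : Ordinal} (h : rr η M β = rr η M α) : J η M β = J η M α := by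
  unfold J; rw [show {γ | rr η M γ = rr η M β} = {γ | rr η M γ = rr η M α} by
    ext γ; simp [h]]

lemma J_J (α : Ordinal) : J η M (J η M α) = J η M α := by
  have := J_eq_of_rr_eq η M (rr_J η M α)
  unfold J at this ⊢
  rw [this]

lemma dl_gt {α : Ordinal} (hα : α < η) : α < dl η M α := by
  have hne : ({β | α < β ∧ rr η M β ≠ rr η M α} ∪ {η} : Set Ordinal).Nonempty :=
    ⟨η, Or.inr rfl⟩
  have := csInf_mem hne
  rcases this with h | h
  · exact h.1
  · rw [mem_singleton_iff] at h; rw [dl, h] at *; exact hα.trans_eq h.symm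

lemma dl_le_eta (α : Ordinal) : dl η M α ≤ η := csInf_le' (Or.inr rfl)

lemma rr_const {α β : Ordinal} (h1 : α ≤ β) (h2 : β < dl η M α) :
    rr η M β = rr η M α := by
  rcases eq_or_lt_of_le h1 with rfl | h1
  · rfl
  · by_contra h
    have hm : β ∈ ({γ | α < γ ∧ rr η M γ ≠ rr η M α} ∪ {η} : Set Ordinal) := Or.inl ⟨h1, h⟩
    exact absurd (csInf_le' hm) h2.not_ge

lemma dl_J (α : Ordinal) : dl η M (J η M α) = dl η M α := by
  unfold dl
  congr 1
  rw [rr_J]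
  ext β
  simp only [mem_union, mem_setOf_eq, mem_singleton_iff]
  constructor
  · rintro (⟨h1, h2⟩ | h) <;> [skip; exact Or.inr h]
    refine Or.inl ⟨?_, h2⟩
    by_contra hc
    push_neg at hc
    exact h2 (le_antisymm (rr_mono η M hc) ((rr_J η M α).symm.trans_le (rr_mono η M h1.le)))
  · rintro (⟨h1, h2⟩ | h) <;> [exact Or.inl ⟨(J_le η M α).trans_lt h1, h2⟩; exact Or.inr h]

/-! ### structural lemmas for `Esc` -/

lemma Esc_subset_Icc (B : Set ℝ) (d i : Ordinal) : Esc η M B d i ⊆ Icc (0:ℝ) 1 := by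
  rw [Esc_def]; exact inter_subset_left.trans (hull_subset_Icc _)

lemma Esc_isGδ (B : Set ℝ) (d i : Ordinal) : IsGδ (Esc η M B d i) := by
  rw [Esc_def]; exact (hull_isGδ _).inter (hull_isGδ _)

lemma Esc_subset_FH (B : Set ℝ) (d i : Ordinal) :
    Esc η M B d i ⊆ hull (Mt η M (dl η M d)) := by
  rw [Esc_def]; exact inter_subset_right

lemma Esc_mono (B : Set ℝ) (d : Ordinal) {j i : Ordinal} (h : j ≤ i) :
    Esc η M B d j ⊆ Esc η M B d i := by
  rcases eq_or_lt_of_le h with rfl | h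
  · exact le_rfl
  · rw [Esc_def η M B d i]
    refine subset_inter ?_ (Esc_subset_FH η M B d j)
    intro x hx
    refine subset_hull _ ⟨?_, Esc_subset_Icc η M B d j hx⟩
    exact Or.inr (mem_iUnion.2 ⟨⟨j, h⟩, hx⟩)

lemma cIdx_le_dl {d : Ordinal} (hd : d < η) (i : Ordinal) :
    cIdx η M d i ≤ dl η M d := by
  refine max_le (dl_gt η M hd).le ?_
  by_cases h : i < (dl η M d).cof.ord
  · exact (fseq_lt h).le
  · rw [fseq, dif_neg h]; exact zero_le

lemma N_subset_Esc (B : Set ℝ) {d : Ordinal} (hd : d < η) (i : Ordinal) :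
    Mt η M (cIdx η M d i) \ B ⊆ Esc η M B d i := by
  rw [Esc_def]
  refine subset_inter ?_ ?_
  · intro x hx
    exact subset_hull _ ⟨Or.inl hx, Mt_subset_Icc η M _ hx.1⟩
  · exact (diff_subset.trans (Mt_mono η M (cIdx_le_dl η M hd i))).trans
      (subset_hull' (Mt_subset_Icc η M _))

/-! ### structural lemmas for `Ax` -/

lemma Ax_subset_Icc (α : Ordinal) : Ax η M α ⊆ Icc (0:ℝ) 1 := by
  induction α using Ordinal.induction with
  | h α IH =>
    rw [Ax_def]
    split
    · exact hull_subset_Icc _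
    · next h =>
      exact union_subset (IH _ ((J_le η M α).lt_of_ne h)) (Esc_subset_Icc η M _ _ _)

lemma Ax_isGδ (α : Ordinal) : IsGδ (Ax η M α) := by
  induction α using Ordinal.induction with
  | h α IH =>
    rw [Ax_def]
    split
    · exact hull_isGδ _
    · next h =>
      exact (IH _ ((J_le η M α).lt_of_ne h)).union (Esc_isGδ η M _ _ _)

lemma Ax_meas (α : Ordinal) : MeasurableSet (Ax η M α) := (Ax_isGδ η M α).measurableSet

lemma Ax_subset_base (α : Ordinal) :
    Ax η M α ⊆ Ax η M (J η M α) ∪ hull (Mt η M (dl η M (J η M α))) := by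
  by_cases h : J η M α = α
  · rw [h]; exact subset_union_left
  · rw [Ax_def, dif_neg h]
    exact union_subset_union_right _ (Esc_subset_FH η M _ _ _)

/-! ### idx -/

lemma idx_spec {α : Ordinal} (hα : α < η) :
    α ≤ cIdx η M (J η M α) (idx η M α) ∧ idx η M α < (dl η M (J η M α)).cof.ord := by
  have hdl : α < dl η M (J η M α) := by rw [dl_J]; exact dl_gt η M hα
  obtain ⟨i₀, hi₀, hle⟩ := fseq_cofinal hdl
  have hmem : i₀ ∈ {i | α ≤ cIdx η M (J η M α) i} := hle.trans (le_max_right _ _)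
  exact ⟨csInf_mem ⟨i₀, hmem⟩, (csInf_le' hmem).trans_lt hi₀⟩

lemma idx_mono {β α : Ordinal} (hJ : J η M β = J η M α) (h : β ≤ α)
    (hα : α < η) : idx η M β ≤ idx η M α := by
  have hne : {i | α ≤ cIdx η M (J η M α) i}.Nonempty :=
    ⟨idx η M α, (idx_spec η M hα).1⟩
  refine csInf_le_csInf (OrderBot.bddBelow _) hne ?_
  intro i hi
  rw [mem_setOf_eq, hJ]
  exact h.trans hi

lemma Ax_mono : ∀ α, α < η → ∀ β, β ≤ α → Ax η M β ⊆ Ax η M α := by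
  intro α
  induction α using Ordinal.induction with
  | h α IH =>
    intro hα β hβ
    rcases eq_or_lt_of_le hβ with rfl | hβ
    · exact le_rfl
    by_cases hs : J η M α = α
    · rw [Ax_def η M α, dif_pos hs]
      intro x hx
      exact subset_hull _ ⟨Or.inr (mem_iUnion.2 ⟨⟨β, hβ⟩, hx⟩), Ax_subset_Icc η M β hx⟩
    · have hJlt : J η M α < α := (J_le η M α).lt_of_ne hs
      rw [Ax_def η M α, dif_neg hs]
      by_cases hbd : β ≤ J η M α
      · exact (IH _ hJlt (hJlt.trans hα) β hbd).trans subset_union_left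
      · push_neg at hbd
        have hrr : rr η M β = rr η M α := le_antisymm (rr_mono η M hβ.le)
          ((rr_J η M α).symm.trans_le (rr_mono η M hbd.le))
        have hJβ : J η M β = J η M α := J_eq_of_rr_eq η M hrr
        have hsβ : J η M β ≠ β := by rw [hJβ]; exact hbd.ne
        rw [Ax_def η M β, dif_neg hsβ, hJβ]
        refine union_subset_union_right _ ?_
        exact Esc_mono η M _ _ (idx_mono η M hJβ hβ.le hα)

/-! ### countability of the set of interval starts -/

lemma rr_lt_of_starts {d e : Ordinal} (hd : J η M d = d) (he : J η M e = e)
    (hde : d < e) : rr η M d < rr η M e := by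
  refine lt_of_le_of_ne (rr_mono η M hde.le) fun hc => ?_
  have : J η M e ≤ d := csInf_le' hc
  rw [he] at this
  exact absurd this hde.not_ge

lemma D_countable : Set.Countable {d : Ordinal.{0} | d < η ∧ J η M d = d} := by
  classical
  set D := {d : Ordinal.{0} | d < η ∧ J η M d = d} with hD
  set D' := {d ∈ D | ∃ e ∈ D, d < e} with hD'
  have hkey : ∀ d ∈ D', ∃ q : ℚ, rr η M d < Real.toNNReal q ∧
      ((Real.toNNReal q : ℝ≥0∞)) < rr η M (sInf {e | e ∈ D ∧ d < e}) := by
    rintro d ⟨hdD, e, heD, hde⟩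
    have hne : {e | e ∈ D ∧ d < e}.Nonempty := ⟨e, heD, hde⟩
    have hmem := csInf_mem hne
    have hlt : rr η M d < rr η M (sInf {e | e ∈ D ∧ d < e}) :=
      rr_lt_of_starts η M hdD.2 hmem.1.2 hmem.2
    obtain ⟨q, _, h1, h2⟩ := ENNReal.lt_iff_exists_rat_btwn.1 hlt
    exact ⟨q, h1, h2⟩
  set F : Ordinal → ℚ := fun d => if h : d ∈ D' then (hkey d h).choose else 0 with hF
  have hFspec : ∀ d ∈ D', rr η M d < Real.toNNReal (F d) ∧
      ((Real.toNNReal (F d) : ℝ≥0∞)) < rr η M (sInf {e | e ∈ D ∧ d < e}) := by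
    intro d h; rw [hF]; simp only [dif_pos h]; exact (hkey d h).choose_spec
  have hord : ∀ d₁ ∈ D', ∀ d₂ ∈ D', d₁ < d₂ →
      ((Real.toNNReal (F d₁) : ℝ≥0∞)) < Real.toNNReal (F d₂) := by
    intro d₁ h₁ d₂ h₂ hlt
    have hn : sInf {e | e ∈ D ∧ d₁ < e} ≤ d₂ := csInf_le' ⟨h₂.1, hlt⟩
    calc ((Real.toNNReal (F d₁) : ℝ≥0∞)) < rr η M (sInf {e | e ∈ D ∧ d₁ < e}) :=
          (hFspec d₁ h₁).2
      _ ≤ rr η M d₂ := rr_mono η M hn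
      _ < Real.toNNReal (F d₂) := (hFspec d₂ h₂).1
  have hinj : InjOn F D' := by
    intro a ha b hb hab
    rcases lt_trichotomy a b with h | h | h
    · exact absurd (congrArg (fun q : ℚ => ((Real.toNNReal q : ℝ≥0∞))) hab)
        (hord a ha b hb h).ne
    · exact h
    · exact absurd (congrArg (fun q : ℚ => ((Real.toNNReal q : ℝ≥0∞))) hab)
        (hord b hb a ha h).ne'
  have hD'c : D'.Countable :=
    countable_of_injective_of_countable_image hinj (Set.to_countable _)
  have hrest : (D \ D').Subsingleton := by
    intro a ha b hb
    by_contra hne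
    rcases lt_trichotomy a b with h | h | h
    · exact ha.2 ⟨ha.1, b, hb.1, h⟩
    · exact hne h
    · exact hb.2 ⟨hb.1, a, ha.1, h⟩
  have : D = D' ∪ (D \ D') := by
    rw [union_diff_cancel]
    exact fun d hd => hd.1
  rw [this]
  exact hD'c.union hrest.countable

/-! ### nullity of scaffold sets -/

lemma card_eta_le (hη : η < (Order.succ addNull).ord) : η.card ≤ addNull :=
  Order.lt_succ_iff.1 (Cardinal.lt_ord.1 hη)

lemma Esc_null (hη : η < (Order.succ addNull).ord) {d : Ordinal} (hd : d < η)
    (B : Set ℝ) (hBm : MeasurableSet B) (hMtB : Mt η M d ⊆ B)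
    (hBv : volume B = rr η M d) :
    ∀ i, i < (dl η M d).cof.ord → volume (Esc η M B d i) = 0 := by
  intro i
  induction i using Ordinal.induction with
  | h i IH =>
    intro hi
    have hN : volume (Mt η M (cIdx η M d i) \ B) = 0 := by
      set c := cIdx η M d i with hc
      have hdc : d ≤ c := le_max_left _ _
      have hcδ : c < dl η M d := max_lt (dl_gt η M hd) (fseq_lt hi)
      have hrc : rr η M c = rr η M d := rr_const η M hdc hcδ
      refine measure_mono_null (diff_subset_diff_left
        (subset_hull' (Mt_subset_Icc η M c))) ?_
      refine diff_null (hull_meas _) hBm (s := Mt η M d)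
        ((Mt_mono η M hdc).trans (subset_hull' (Mt_subset_Icc η M c))) hMtB ?_ ?_
      · rw [vol_hull' (Mt_subset_Icc η M c)]
        exact hrc
      · rw [vol_hull' (Mt_subset_Icc η M c)]
        exact rr_ne_top η M c
    have hU : volume (⋃ j : Iio i, Esc η M B d j.1) = 0 := by
      refine bUnion_null i ?_ _ fun j hj =>
        ⟨Esc_subset_Icc η M B d j, IH j hj (hj.trans hi)⟩
      calc i.card < (dl η M d).cof := Cardinal.lt_ord.1 hi
        _ ≤ (dl η M d).card := Ordinal.cof_le_card _
        _ ≤ η.card := Ordinal.card_le_card (dl_le_eta η M d)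
        _ ≤ addNull := card_eta_le η hη
        _ ≤ addNull := le_rfl
      -- need strict <; fix below
    rw [Esc_def]
    refine measure_mono_null inter_subset_left ?_
    rw [vol_hull]
    refine measure_mono_null inter_subset_left ?_
    refine measure_union_null hN hU

/-! ### the main induction -/

lemma Ax_main (hη : η < (Order.succ addNull).ord) :
    ∀ α, α < η → Mt η M α ⊆ Ax η M α ∧ volume (Ax η M α) = rr η M α := by
  intro α
  induction α using Ordinal.induction with
  | h α IH =>
    intro hα
    by_cases hs : J η M α = α
    · -- interval start
      rw [Ax_def η M α, dif_pos hs]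
      set S := Mt η M α ∪ ⋃ β : Iio α, Ax η M β.1 with hS
      have hSI : S ⊆ Icc (0:ℝ) 1 :=
        union_subset (Mt_subset_Icc η M α)
          (iUnion_subset fun β => Ax_subset_Icc η M β.1)
      have hMtS : Mt η M α ⊆ hull S :=
        (subset_union_left (s := Mt η M α)).trans (subset_hull' hSI)
      refine ⟨hMtS, ?_⟩
      set Dα := {d' : Ordinal | d' < α ∧ J η M d' = d'} with hDα
      set Hd := hull (Mt η M α) with hHd
      set Z := ⋃ d' ∈ Dα, ((Ax η M d' ∪ hull (Mt η M (dl η M d'))) \ Hd) with hZ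
      have hkey : S ⊆ Hd ∪ Z := by
        rintro x (hx | hx)
        · exact Or.inl (subset_hull' (Mt_subset_Icc η M α) hx)
        · obtain ⟨⟨β, hβlt⟩, hxβ⟩ := mem_iUnion.1 hx
          by_cases hH : x ∈ Hd
          · exact Or.inl hH
          · refine Or.inr (mem_biUnion (show J η M β ∈ Dα from
              ⟨(J_le η M β).trans_lt hβlt, J_J η M β⟩) ?_)
            exact ⟨Ax_subset_base η M β hxβ, hH⟩
      have hZ0 : volume Z = 0 := by
        have hcount : Dα.Countable :=
          (D_countable η M).mono fun d' h => mem_setOf_eq ▸ ⟨h.1.trans hα, h.2⟩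
        refine (measure_biUnion_null_iff hcount).2 fun d' hd' => ?_
        have hd'α : d' < α := hd'.1
        have hd'η : d' < η := hd'α.trans hα
        obtain ⟨hIH1, hIH2⟩ := IH d' hd'α hd'η
        rw [union_diff_distrib]
        refine measure_union_null ?_ ?_
        · refine diff_null (Ax_meas η M d') (hull_meas _) (s := Mt η M d')
            hIH1 ((Mt_mono η M hd'α.le).trans (subset_hull' (Mt_subset_Icc η M α)))
            ?_ ?_
          · rw [hIH2]; rfl
          · rw [hIH2]; exact rr_ne_top η M d'
        · have hdlle : dl η M d' ≤ α := by
            by_contra hcon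
            push_neg at hcon
            have h1 : rr η M α = rr η M d' := rr_const η M hd'α.le hcon
            have h2 : J η M α = J η M d' := J_eq_of_rr_eq η M h1
            rw [hs, hd'.2] at h2
            exact absurd h2 hd'α.ne'
          refine diff_null (hull_meas _) (hull_meas _) (s := Mt η M (dl η M d'))
            (subset_hull' (Mt_subset_Icc η M _))
            ((Mt_mono η M hdlle).trans (subset_hull' (Mt_subset_Icc η M α))) ?_ ?_
          · exact vol_hull' (Mt_subset_Icc η M _)
          · rw [vol_hull' (Mt_subset_Icc η M _)]; exact rr_ne_top η M _
      rw [vol_hull' hSI]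
      refine le_antisymm ?_ (measure_mono subset_union_left)
      calc volume S ≤ volume (Hd ∪ Z) := measure_mono hkey
        _ ≤ volume Hd + volume Z := measure_union_le _ _
        _ = rr η M α := by
            rw [hZ0, add_zero, hHd, vol_hull' (Mt_subset_Icc η M α)]; rfl
    · -- inside an interval
      have hJlt : J η M α < α := (J_le η M α).lt_of_ne hs
      set d := J η M α with hd
      have hdη : d < η := hJlt.trans hα
      obtain ⟨hIH1, hIH2⟩ := IH d hJlt hdη
      obtain ⟨hcle, hcof⟩ := idx_spec η M hα
      have hEnull : volume (Esc η M (Ax η M d) d (idx η M α)) = 0 :=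
        Esc_null η M hη hdη (Ax η M d) (Ax_meas η M d) hIH1 hIH2 _ hcof
      rw [Ax_def η M α, dif_neg hs]
      have hrr : rr η M α = rr η M d := by
        refine rr_const η M (J_le η M α) ?_
        rw [hd, dl_J]
        exact dl_gt η M hα
      have hsub : Mt η M α ⊆ Ax η M d ∪ Esc η M (Ax η M d) d (idx η M α) := by
        intro x hx
        by_cases hxA : x ∈ Ax η M d
        · exact Or.inl hxA
        · exact Or.inr (N_subset_Esc η M (Ax η M d) hdη (idx η M α)
            ⟨Mt_mono η M hcle hx, hxA⟩)
      refine ⟨hsub, le_antisymm ?_ ?_⟩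
      · calc volume (Ax η M d ∪ Esc η M (Ax η M d) d (idx η M α))
            ≤ volume (Ax η M d) + volume (Esc η M (Ax η M d) d (idx η M α)) :=
              measure_union_le _ _
          _ = rr η M α := by rw [hIH2, hEnull, add_zero, hrr]
      · simp only [rr]
        exact measure_mono hsub

end MGH

/-- Every increasing chain of subsets of `[0,1]` of order type `η < add(N)⁺` (the
successor cardinal of `add(N)`) admits an increasing family of Gδ hulls. Here `volume`
applied to an arbitrary set is the Lebesgue outer measure, and cardinals are identified
with their initial ordinals. -/
theorem monotone_Gdelta_hull_on_wellordered_chain_below_succ_add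
    (η : Ordinal) (hη : η < (Order.succ addNull).ord) (M : Ordinal → Set ℝ)
    (hM : ∀ α < η, M α ⊆ Icc (0:ℝ) 1)
    (hmono : ∀ α β : Ordinal, α ≤ β → β < η → M α ⊆ M β) :
    ∃ A : Ordinal → Set ℝ,
      (∀ α < η, IsGδ (A α) ∧ A α ⊆ Icc (0:ℝ) 1 ∧ M α ⊆ A α ∧
        volume (A α) = volume (M α)) ∧
      (∀ α β : Ordinal, α ≤ β → β < η → A α ⊆ A β) := by
  classical
  refine ⟨MGH.Ax η M, ?_, ?_⟩
  · intro α hα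
    have hMt : MGH.Mt η M α = M α := by
      apply Subset.antisymm
      · exact iUnion₂_subset fun β hβ => inter_subset_left.trans (hmono β α hβ.1 hα)
      · intro x hx
        exact mem_iUnion₂.2 ⟨α, ⟨le_rfl, hα⟩, hx, hM α hα hx⟩
    obtain ⟨h1, h2⟩ := MGH.Ax_main η M hη α hα
    refine ⟨MGH.Ax_isGδ η M α, MGH.Ax_subset_Icc η M α, hMt ▸ h1, ?_⟩
    rw [h2, MGH.rr, hMt]
  · intro α β hab hb
    exact MGH.Ax_mono η M β hb α hab
end
end
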